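/- arXiv:2312.12179 — 3 statements merged into one kernel-verified Lean document; each statement's English description precedes it below -/
import Mathlib

section
/- For every c > 0 and every μ ∈ S₁, the mean of F_c(μ) is at most twice the mean of μ; in particular F_c maps S₁ into S₁. -/
open Filter Topology Set

noncomputable section

/-- Convolution of two (sub)probability mass functions on `ℕ∞ = ℕ⁺ ∪ {∞} ∪ {0}`,
with the convention `∞ + anything = ∞`. -/
def conv (μ ν : ℕ∞ → ℝ) : ℕ∞ → ℝ :=
  fun k => ∑' p : ℕ∞ × ℕ∞, if p.1 + p.2 = k then μ p.1 * ν p.2 else 0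

/-- The factor `(l(l-1)/2) / (l(l-1)/2 + c)`, the probability that the coalescence
from `l` to `l-1` lineages happens before an independent `Exp(c)` time. -/
def kingmanFactor (c : ℝ) (l : ℕ) : ℝ :=
  ((l : ℝ) * ((l : ℝ) - 1) / 2) / ((l : ℝ) * ((l : ℝ) - 1) / 2 + c)

/-- `pK c j i` : the probability that Kingman's coalescent started from `j` lineages
has exactly `i` lineages at an independent exponential time with rate `c`. -/
def pK (c : ℝ) (j : ℕ∞) (i : ℕ) : ℝ :=
  (c / ((i : ℝ) * ((i : ℝ) - 1) / 2 + c)) *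
    (if j = ⊤ then ∏' l : ℕ, kingmanFactor c (i + 1 + l)
     else ∏ l ∈ Finset.Icc (i + 1) j.toNat, kingmanFactor c l)

/-- The mass that `F_c μ` puts on a finite `k ∈ ℕ⁺`. -/
def FcFin (c : ℝ) (μ : ℕ∞ → ℝ) (k : ℕ) : ℝ :=
  ∑' j : ℕ∞, if (k : ℕ∞) ≤ j then conv μ μ j * pK c j k else 0

/-- The map `F_c` on distributions on `ℕ⁺ ∪ {∞}`; the mass at `∞` is the remaining mass. -/
def Fc (c : ℝ) (μ : ℕ∞ → ℝ) : ℕ∞ → ℝ :=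
  fun k =>
    if k = ⊤ then 1 - ∑' n : ℕ, FcFin c μ n
    else if k = 0 then 0 else FcFin c μ k.toNat

/-- `μ` is a probability distribution on `ℕ⁺ ∪ {∞}` (no mass at `0`). -/
def IsDist (μ : ℕ∞ → ℝ) : Prop :=
  (∀ k, 0 ≤ μ k) ∧ μ 0 = 0 ∧ HasSum μ 1

/-- The mean of a distribution on `ℕ⁺ ∪ {∞}` (ignoring the mass at `∞`). -/
def distMean (μ : ℕ∞ → ℝ) : ℝ := ∑' n : ℕ, (n : ℝ) * μ (n : ℕ∞)

/-- `μ` belongs to `S₁`: a probability distribution on `ℕ⁺` with finite mean. -/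
def MemS1 (μ : ℕ∞ → ℝ) : Prop :=
  IsDist μ ∧ μ ⊤ = 0 ∧ Summable (fun n : ℕ => (n : ℝ) * μ (n : ℕ∞))

/-- `StDom μ ν` : `μ ⪯ ν` in the usual stochastic order, i.e.
`μ([0,x]) ≥ ν([0,x])` for all `x ∈ [0,∞]`. -/
def StDom (μ ν : ℕ∞ → ℝ) : Prop :=
  ∀ x : ℕ∞, (∑' k : ℕ∞, if k ≤ x then ν k else 0) ≤ ∑' k : ℕ∞, if k ≤ x then μ k else 0

/-- The unit point mass at `a`. -/
def delta (a : ℕ∞) : ℕ∞ → ℝ := fun k => if k = a then 1 else 0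

end

noncomputable section Aux

lemma enat_hasSum_iff {h : ℕ∞ → ℝ} (h0 : h ⊤ = 0) {a : ℝ} :
    HasSum (fun n : ℕ => h n) a ↔ HasSum h a := by
  have hinj : Function.Injective (fun n : ℕ => (n : ℕ∞)) := Nat.cast_injective
  refine Function.Injective.hasSum_iff hinj ?_
  intro x hx
  rcases eq_or_ne x ⊤ with rfl | hne
  · exact h0
  · obtain ⟨n, rfl⟩ := WithTop.ne_top_iff_exists.mp hne
    exact absurd ⟨n, rfl⟩ hx

lemma enat_pair_hasSum_iff {f : ℕ∞ × ℕ∞ → ℝ}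
    (h0 : ∀ p : ℕ∞ × ℕ∞, p.1 = ⊤ ∨ p.2 = ⊤ → f p = 0) {a : ℝ} :
    HasSum (fun p : ℕ × ℕ => f ((p.1 : ℕ∞), (p.2 : ℕ∞))) a ↔ HasSum f a := by
  have hinj : Function.Injective (fun p : ℕ × ℕ => ((p.1 : ℕ∞), (p.2 : ℕ∞))) := by
    intro p q hpq
    simp only [Prod.ext_iff, Nat.cast_inj] at hpq
    exact Prod.ext hpq.1 hpq.2
  refine Function.Injective.hasSum_iff hinj ?_
  intro x hx
  apply h0
  by_contra hcon
  push_neg at hcon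
  obtain ⟨n, hn⟩ := WithTop.ne_top_iff_exists.mp hcon.1
  obtain ⟨m, hm⟩ := WithTop.ne_top_iff_exists.mp hcon.2
  exact hx ⟨(n, m), Prod.ext hn hm⟩

/-- finite-`j` version of `pK`. -/
def Pfin (c : ℝ) (j k : ℕ) : ℝ :=
  (c / ((k : ℝ) * ((k : ℝ) - 1) / 2 + c)) * ∏ l ∈ Finset.Icc (k + 1) j, kingmanFactor c l

lemma pK_coe (c : ℝ) (j k : ℕ) : pK c (j : ℕ∞) k = Pfin c j k := by
  simp [pK, Pfin]

lemma b_nonneg (k : ℕ) : 0 ≤ (k : ℝ) * ((k : ℝ) - 1) / 2 := by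
  rcases k with _ | n
  · norm_num
  · have : (1:ℝ) ≤ ((n+1 : ℕ) : ℝ) := by exact_mod_cast Nat.one_le_iff_ne_zero.mpr (by omega)
    nlinarith

lemma kf_nonneg {c : ℝ} (hc : 0 < c) (l : ℕ) : 0 ≤ kingmanFactor c l := by
  have := b_nonneg l
  unfold kingmanFactor
  positivity

lemma kf_le_one {c : ℝ} (hc : 0 < c) (l : ℕ) : kingmanFactor c l ≤ 1 := by
  have hb := b_nonneg l
  unfold kingmanFactor
  rw [div_le_one (by linarith)]
  linarith

lemma kf_one {c : ℝ} (_hc : 0 < c) : kingmanFactor c 1 = 0 := by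
  unfold kingmanFactor
  norm_num

lemma Pfin_nonneg {c : ℝ} (hc : 0 < c) (j k : ℕ) : 0 ≤ Pfin c j k := by
  unfold Pfin
  apply mul_nonneg
  · have := b_nonneg k; positivity
  · exact Finset.prod_nonneg fun l _ => kf_nonneg hc l

lemma Pfin_le_one {c : ℝ} (hc : 0 < c) (j k : ℕ) : Pfin c j k ≤ 1 := by
  unfold Pfin
  have h1 : c / ((k : ℝ) * ((k : ℝ) - 1) / 2 + c) ≤ 1 := by
    have hb := b_nonneg k
    rw [div_le_one (by linarith)]; linarith
  have h2 : ∏ l ∈ Finset.Icc (k + 1) j, kingmanFactor c l ≤ 1 :=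
    Finset.prod_le_one (fun l _ => kf_nonneg hc l) (fun l _ => kf_le_one hc l)
  have h0 : 0 ≤ c / ((k : ℝ) * ((k : ℝ) - 1) / 2 + c) := by
    have := b_nonneg k; positivity
  calc _ ≤ c / ((k : ℝ) * ((k : ℝ) - 1) / 2 + c) * 1 :=
        mul_le_mul_of_nonneg_left h2 h0
    _ ≤ 1 := by rw [mul_one]; exact h1

lemma Pfin_zero {c : ℝ} (hc : 0 < c) {j : ℕ} (hj : 1 ≤ j) : Pfin c j 0 = 0 := by
  unfold Pfin
  have h1 : (1 : ℕ) ∈ Finset.Icc (0 + 1) j := by simpa using hj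
  rw [Finset.prod_eq_zero h1 (kf_one hc)]
  ring

lemma sum_Pfin {c : ℝ} (hc : 0 < c) {j : ℕ} (hj : 1 ≤ j) :
    ∑ k ∈ Finset.Icc 1 j, Pfin c j k = 1 := by
  set T : ℕ → ℝ := fun k =>
    if k = 0 then 0 else ∏ l ∈ Finset.Icc (k + 1) j, kingmanFactor c l with hT
  have key : ∀ i < j, Pfin c j (i + 1) = T (i + 1) - T i := by
    intro i hi
    rcases Nat.eq_zero_or_pos i with rfl | hipos
    · simp only [hT]
      norm_num [Pfin]
      rw [div_self hc.ne']
      ring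
    · have hk1 : i + 1 ≤ j := hi
      have hins : Finset.Icc (i + 1) j = insert (i + 1) (Finset.Icc (i + 2) j) := by
        ext x; simp [Finset.mem_Icc]; omega
      have hnotmem : (i + 1) ∉ Finset.Icc (i + 2) j := by simp
      simp only [hT, if_neg (Nat.succ_ne_zero i), if_neg (by omega : i ≠ 0)]
      rw [hins, Finset.prod_insert hnotmem]
      unfold Pfin
      have hb := b_nonneg (i + 1)
      have hbc : (0:ℝ) < ((i+1 : ℕ) : ℝ) * (((i+1 : ℕ) : ℝ) - 1) / 2 + c := by linarith
      have hfac : c / (((i+1 : ℕ) : ℝ) * (((i+1 : ℕ) : ℝ) - 1) / 2 + c)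
          = 1 - kingmanFactor c (i + 1) := by
        unfold kingmanFactor
        field_simp
        have hD : (0:ℝ) < ((i+1 : ℕ) : ℝ) * (((i+1 : ℕ) : ℝ) - 1) + c * 2 := by linarith
        rw [eq_sub_iff_add_eq, ← add_div, div_eq_one_iff_eq hD.ne']; ring
      rw [hfac]
      ring
  have hre : ∑ k ∈ Finset.Icc 1 j, Pfin c j k
      = ∑ i ∈ Finset.range j, Pfin c j (i + 1) := by
    rw [show Finset.Icc 1 j = Finset.Ico 1 (j + 1) by
        ext x; simp [Finset.mem_Icc, Finset.mem_Ico],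
      Finset.sum_Ico_eq_sum_range]
    simp only [Nat.add_sub_cancel]
    exact Finset.sum_congr rfl fun i _ => by rw [Nat.add_comm]
  rw [hre, Finset.sum_congr rfl (fun i hi => key i (Finset.mem_range.mp hi)),
    Finset.sum_range_sub T j]
  simp only [hT, if_neg (by omega : j ≠ 0), if_pos rfl]
  rw [Finset.Icc_eq_empty (by omega)]
  simp

lemma sum_weighted_Pfin {c : ℝ} (hc : 0 < c) {j : ℕ} (hj : 1 ≤ j) :
    ∑ k ∈ Finset.Icc 1 j, (k : ℝ) * Pfin c j k ≤ (j : ℝ) := by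
  calc ∑ k ∈ Finset.Icc 1 j, (k : ℝ) * Pfin c j k
      ≤ ∑ k ∈ Finset.Icc 1 j, (j : ℝ) * Pfin c j k := by
        refine Finset.sum_le_sum fun k hk => ?_
        have hkj : k ≤ j := (Finset.mem_Icc.mp hk).2
        exact mul_le_mul_of_nonneg_right (by exact_mod_cast hkj) (Pfin_nonneg hc j k)
    _ = (j : ℝ) * ∑ k ∈ Finset.Icc 1 j, Pfin c j k := by rw [Finset.mul_sum]
    _ = (j : ℝ) := by rw [sum_Pfin hc hj, mul_one]

end Aux
set_option maxHeartbeats 1000000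
/-- For every `c > 0` and `μ ∈ S₁`, the mean of `F_c(μ)` is at most
twice the mean of `μ`; in particular `F_c` maps `S₁` into `S₁`. -/
theorem Fc_maps_S1 (c : ℝ) (hc : 0 < c) (μ : ℕ∞ → ℝ) (hμ : MemS1 μ) :
    MemS1 (Fc c μ) ∧ distMean (Fc c μ) ≤ 2 * distMean μ := by
  obtain ⟨⟨hpos, hzero, hsum⟩, htop, hmean⟩ := hμ
  set m := distMean μ with hm_def
  have hμ1 : HasSum (fun n : ℕ => μ (n : ℕ∞)) 1 := (enat_hasSum_iff htop).mpr hsum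
  have hμpos : ∀ n : ℕ, 0 ≤ μ (n : ℕ∞) := fun n => hpos _
  have hmw : HasSum (fun n : ℕ => (n : ℝ) * μ (n : ℕ∞)) m := hmean.hasSum
  set ν : ℕ → ℝ := fun j => conv μ μ (j : ℕ∞) with hν_def
  -- conv at ⊤ vanishes
  have hconvtop : conv μ μ ⊤ = 0 := by
    have e : ∀ p : ℕ∞ × ℕ∞, (if p.1 + p.2 = ⊤ then μ p.1 * μ p.2 else 0) = 0 := by
      intro p
      split_ifs with h
      · rcases WithTop.add_eq_top.mp h with h | h
        · rw [h]; exact mul_eq_zero_of_left htop _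
        · rw [h]; exact mul_eq_zero_of_right _ htop
      · rfl
    simp only [conv, e, tsum_zero]
  -- conv at finite j as a sum over ℕ × ℕ
  have hconvcoe : ∀ j : ℕ, ν j = ∑' p : ℕ × ℕ,
      (if p.1 + p.2 = j then μ (p.1 : ℕ∞) * μ (p.2 : ℕ∞) else 0) := by
    intro j
    have h0 : ∀ p : ℕ∞ × ℕ∞, p.1 = ⊤ ∨ p.2 = ⊤ →
        (if p.1 + p.2 = (j : ℕ∞) then μ p.1 * μ p.2 else 0) = 0 := by
      intro p hp
      have ht : p.1 + p.2 = ⊤ := WithTop.add_eq_top.mpr hp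
      rw [ht, if_neg (by simp)]
    have key := tsum_eq_tsum_of_hasSum_iff_hasSum
      (f := fun p : ℕ × ℕ =>
        if ((p.1 : ℕ∞), (p.2 : ℕ∞)).1 + ((p.1 : ℕ∞), (p.2 : ℕ∞)).2 = (j : ℕ∞) then
          μ ((p.1 : ℕ∞), (p.2 : ℕ∞)).1 * μ ((p.1 : ℕ∞), (p.2 : ℕ∞)).2 else 0)
      (g := fun p : ℕ∞ × ℕ∞ => if p.1 + p.2 = (j : ℕ∞) then μ p.1 * μ p.2 else 0)
      (fun {a} => enat_pair_hasSum_iff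
        (f := fun p : ℕ∞ × ℕ∞ => if p.1 + p.2 = (j : ℕ∞) then μ p.1 * μ p.2 else 0) h0)
    show conv μ μ (j : ℕ∞) = _
    rw [conv, ← key]
    refine tsum_congr fun p => ?_
    have hcond : (((p.1 : ℕ∞) + (p.2 : ℕ∞) = (j : ℕ∞))) ↔ (p.1 + p.2 = j) := by
      rw [← Nat.cast_add, Nat.cast_inj]
    simp only [hcond]
  have hf2 : HasSum (fun p : ℕ × ℕ => μ (p.1 : ℕ∞) * μ (p.2 : ℕ∞)) 1 := by
    have h := hμ1.mul hμ1 (hμ1.summable.mul_of_nonneg hμ1.summable hμpos hμpos)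
    simpa using h
  have fiber_eq : ∀ (F : ℕ × ℕ → ℝ) (j : ℕ),
      ∑' b : ((fun p : ℕ × ℕ => p.1 + p.2) ⁻¹' {j} : Set (ℕ × ℕ)), F b
        = ∑' p : ℕ × ℕ, (if p.1 + p.2 = j then F p else 0) := by
    intro F j
    rw [tsum_subtype]
    refine tsum_congr fun p => ?_
    by_cases hp : p.1 + p.2 = j
    · rw [Set.indicator_of_mem (by simp [hp]) F, if_pos hp]
    · rw [Set.indicator_of_notMem (by simp [hp]) F, if_neg hp]
  have hνsum : HasSum ν 1 := by
    have h := hf2.tsum_fiberwise (fun p => p.1 + p.2)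
    have e : (fun j : ℕ => ∑' b : ((fun p : ℕ × ℕ => p.1 + p.2) ⁻¹' {j} : Set (ℕ × ℕ)),
        μ ((b : ℕ × ℕ).1 : ℕ∞) * μ ((b : ℕ × ℕ).2 : ℕ∞)) = ν := by
      funext j
      rw [fiber_eq (fun p : ℕ × ℕ => μ (p.1 : ℕ∞) * μ (p.2 : ℕ∞)) j, ← hconvcoe]
    rwa [e] at h
  have hG : HasSum (fun p : ℕ × ℕ =>
      ((p.1 : ℝ) + (p.2 : ℝ)) * (μ (p.1 : ℕ∞) * μ (p.2 : ℕ∞))) (2 * m) := by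
    have hnn : ∀ n : ℕ, 0 ≤ (n : ℝ) * μ (n : ℕ∞) :=
      fun n => mul_nonneg (Nat.cast_nonneg n) (hμpos n)
    have hs1 : Summable fun p : ℕ × ℕ => ((p.1 : ℝ) * μ (p.1 : ℕ∞)) * μ (p.2 : ℕ∞) :=
      hmw.summable.mul_of_nonneg hμ1.summable hnn hμpos
    have hs2 : Summable fun p : ℕ × ℕ => μ (p.1 : ℕ∞) * ((p.2 : ℝ) * μ (p.2 : ℕ∞)) :=
      hμ1.summable.mul_of_nonneg hmw.summable hμpos hnn
    have h1 := hmw.mul hμ1 hs1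
    have h2 := hμ1.mul hmw hs2
    have efun : (fun p : ℕ × ℕ =>
        ((p.1 : ℝ) + (p.2 : ℝ)) * (μ (p.1 : ℕ∞) * μ (p.2 : ℕ∞)))
        = fun p : ℕ × ℕ => ((p.1 : ℝ) * μ (p.1 : ℕ∞)) * μ (p.2 : ℕ∞)
            + μ (p.1 : ℕ∞) * ((p.2 : ℝ) * μ (p.2 : ℕ∞)) :=
      funext fun p => by ring
    rw [efun, show (2 : ℝ) * m = m * 1 + 1 * m by ring]
    exact h1.add h2
  have hνw : HasSum (fun j : ℕ => (j : ℝ) * ν j) (2 * m) := by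
    have h := hG.tsum_fiberwise (fun p => p.1 + p.2)
    have e : (fun j : ℕ => ∑' b : ((fun p : ℕ × ℕ => p.1 + p.2) ⁻¹' {j} : Set (ℕ × ℕ)),
        (((b : ℕ × ℕ).1 : ℝ) + ((b : ℕ × ℕ).2 : ℝ))
          * (μ ((b : ℕ × ℕ).1 : ℕ∞) * μ ((b : ℕ × ℕ).2 : ℕ∞)))
        = fun j : ℕ => (j : ℝ) * ν j := by
      funext j
      rw [fiber_eq (fun p : ℕ × ℕ =>
        ((p.1 : ℝ) + (p.2 : ℝ)) * (μ (p.1 : ℕ∞) * μ (p.2 : ℕ∞))) j]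
      rw [hconvcoe j, ← tsum_mul_left]
      refine tsum_congr fun p => ?_
      split_ifs with h'
      · rw [← h']; push_cast; ring
      · rw [mul_zero]
    rwa [e] at h
  have hνpos : ∀ j, 0 ≤ ν j := by
    intro j
    rw [hconvcoe j]
    refine tsum_nonneg fun p => ?_
    split_ifs
    · exact mul_nonneg (hμpos _) (hμpos _)
    · exact le_rfl
  have hν0 : ν 0 = 0 := by
    rw [hconvcoe 0]
    have e : ∀ p : ℕ × ℕ,
        (if p.1 + p.2 = 0 then μ (p.1 : ℕ∞) * μ (p.2 : ℕ∞) else 0) = 0 := by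
      intro p
      split_ifs with h
      · have h1 : p.1 = 0 := by omega
        rw [h1, Nat.cast_zero, hzero, zero_mul]
      · rfl
    exact (tsum_congr e).trans tsum_zero
  -- FcFin over ℕ
  have hFcFin : ∀ k : ℕ, FcFin c μ k
      = ∑' j : ℕ, (if k ≤ j then ν j * Pfin c j k else 0) := by
    intro k
    have h0 : (fun j : ℕ∞ => if (k : ℕ∞) ≤ j then conv μ μ j * pK c j k else 0) ⊤ = 0 := by
      simp [hconvtop]
    have key := tsum_eq_tsum_of_hasSum_iff_hasSum
      (f := fun n : ℕ => if (k : ℕ∞) ≤ (n : ℕ∞) then conv μ μ (n : ℕ∞) * pK c (n : ℕ∞) k else 0)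
      (g := fun j : ℕ∞ => if (k : ℕ∞) ≤ j then conv μ μ j * pK c j k else 0)
      (fun {a} => enat_hasSum_iff
        (h := fun j : ℕ∞ => if (k : ℕ∞) ≤ j then conv μ μ j * pK c j k else 0) h0)
    rw [FcFin, ← key]
    refine tsum_congr fun j => ?_
    rw [pK_coe]
    simp only [Nat.cast_le]
    split_ifs <;> rfl
  set H : ℕ × ℕ → ℝ := fun p => if p.2 ≤ p.1 then ν p.1 * Pfin c p.1 p.2 else 0 with hH
  have hHpos : ∀ p, 0 ≤ H p := by
    intro p
    rw [hH]
    dsimp only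
    split_ifs
    · exact mul_nonneg (hνpos _) (Pfin_nonneg hc _ _)
    · exact le_rfl
  have hHvanish : ∀ j k : ℕ, j < k → H (j, k) = 0 := fun j k h => if_neg (by omega)
  have e1 : ∀ j : ℕ, Finset.range (j + 1) = insert 0 (Finset.Icc 1 j) := by
    intro j; ext x; simp [Finset.mem_range, Finset.mem_Icc]; omega
  have hrow : ∀ j : ℕ, HasSum (fun k => H (j, k)) (ν j) := by
    intro j
    have hfin : HasSum (fun k => H (j, k)) (∑ k ∈ Finset.range (j + 1), H (j, k)) :=
      hasSum_sum_of_ne_finset_zero (by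
        intro k hk
        exact hHvanish j k (by simp [Finset.mem_range] at hk; omega))
    rcases Nat.eq_zero_or_pos j with rfl | hj
    · have e : ∑ k ∈ Finset.range 1, H (0, k) = ν 0 := by
        simp [hH, hν0]
      rwa [e] at hfin
    · have e2 : ∑ k ∈ Finset.range (j + 1), H (j, k) = ν j := by
        rw [e1 j, Finset.sum_insert (by simp)]
        have hH0 : H (j, 0) = ν j * Pfin c j 0 := if_pos (Nat.zero_le j)
        rw [hH0, Pfin_zero hc hj, mul_zero, zero_add]
        have e3 : ∀ k ∈ Finset.Icc 1 j, H (j, k) = ν j * Pfin c j k :=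
          fun k hk => if_pos (Finset.mem_Icc.mp hk).2
        rw [Finset.sum_congr rfl e3, ← Finset.mul_sum, sum_Pfin hc hj, mul_one]
      rwa [e2] at hfin
  have hHsummable : Summable H :=
    (summable_prod_of_nonneg hHpos).mpr
      ⟨fun j => (hrow j).summable,
        (summable_congr fun j => (hrow j).tsum_eq).mpr hνsum.summable⟩
  have hH1 : HasSum H 1 := by
    obtain ⟨S, hS⟩ := hHsummable
    have h := hS.prod_fiberwise hrow
    rwa [← hνsum.unique h] at hS
  have hcol : ∀ k : ℕ, Summable fun j => H (j, k) := by
    intro k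
    refine Summable.of_nonneg_of_le (fun j => hHpos (j, k)) (fun j => ?_) hνsum.summable
    rw [hH]
    dsimp only
    split_ifs
    · calc ν j * Pfin c j k ≤ ν j * 1 :=
          mul_le_mul_of_nonneg_left (Pfin_le_one hc j k) (hνpos j)
        _ = ν j := mul_one _
    · exact hνpos j
  have hcolHasSum : ∀ k : ℕ, HasSum (fun j => H (j, k)) (FcFin c μ k) := by
    intro k
    rw [hFcFin k]
    exact (hcol k).hasSum
  have hFcFinSum : HasSum (fun k : ℕ => FcFin c μ k) 1 := by
    have hswap : HasSum (fun p : ℕ × ℕ => H (p.2, p.1)) 1 :=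
      ((Equiv.prodComm ℕ ℕ).hasSum_iff (f := H) (a := 1)).mpr hH1
    exact hswap.prod_fiberwise fun k => hcolHasSum k
  -- weighted sums
  set W : ℕ → ℝ := fun j => ∑ k ∈ Finset.range (j + 1), (Nat.cast k : ℝ) * H (j, k) with hW
  have hWrow : ∀ j : ℕ, HasSum (fun k : ℕ => (k : ℝ) * H (j, k)) (W j) := by
    intro j
    have hfin : HasSum (fun k : ℕ => (k : ℝ) * H (j, k))
        (∑ k ∈ Finset.range (j + 1), (Nat.cast k : ℝ) * H (j, k)) :=
      hasSum_sum_of_ne_finset_zero (by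
        intro k hk
        rw [hHvanish j k (by simp [Finset.mem_range] at hk; omega), mul_zero])
    exact hfin
  have hWpos : ∀ j, 0 ≤ W j :=
    fun j => Finset.sum_nonneg fun k _ => mul_nonneg (Nat.cast_nonneg k) (hHpos _)
  have hWle : ∀ j, W j ≤ (j : ℝ) * ν j := by
    intro j
    rcases Nat.eq_zero_or_pos j with rfl | hj
    · rw [hW]; simp
    · rw [hW]
      dsimp only
      rw [e1 j, Finset.sum_insert (by simp)]
      simp only [Nat.cast_zero, zero_mul, zero_add]
      have e3 : ∀ k ∈ Finset.Icc 1 j, (k : ℝ) * H (j, k) = ν j * ((k : ℝ) * Pfin c j k) := by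
        intro k hk
        rw [hH]
        dsimp only
        rw [if_pos (Finset.mem_Icc.mp hk).2]
        ring
      rw [Finset.sum_congr rfl e3, ← Finset.mul_sum]
      calc ν j * ∑ k ∈ Finset.Icc 1 j, (k : ℝ) * Pfin c j k
          ≤ ν j * (j : ℝ) := mul_le_mul_of_nonneg_left (sum_weighted_Pfin hc hj) (hνpos j)
        _ = (j : ℝ) * ν j := mul_comm _ _
  have hHwpos : ∀ p : ℕ × ℕ, 0 ≤ (p.2 : ℝ) * H p :=
    fun p => mul_nonneg (Nat.cast_nonneg _) (hHpos p)
  have hHwsummable : Summable (fun p : ℕ × ℕ => (p.2 : ℝ) * H p) :=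
    (summable_prod_of_nonneg hHwpos).mpr
      ⟨fun j => (hWrow j).summable,
        (summable_congr fun j => (hWrow j).tsum_eq).mpr
          (Summable.of_nonneg_of_le hWpos hWle hνw.summable)⟩
  obtain ⟨Sw, hSw⟩ := hHwsummable
  have hWsum : HasSum W Sw := hSw.prod_fiberwise hWrow
  have hSwle : Sw ≤ 2 * m := by
    have h := Summable.tsum_le_tsum hWle hWsum.summable hνw.summable
    rwa [hWsum.tsum_eq, hνw.tsum_eq] at h
  have hmeanFc : HasSum (fun k : ℕ => (k : ℝ) * FcFin c μ k) Sw := by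
    have hswapw : HasSum (fun p : ℕ × ℕ => ((p.1 : ℝ) * H (p.2, p.1))) Sw :=
      ((Equiv.prodComm ℕ ℕ).hasSum_iff
        (f := fun p : ℕ × ℕ => (p.2 : ℝ) * H p) (a := Sw)).mpr hSw
    exact hswapw.prod_fiberwise fun k => (hcolHasSum k).mul_left (k : ℝ)
  -- wrap up
  have hFcFin0 : FcFin c μ 0 = 0 := by
    rw [hFcFin 0]
    have e : ∀ j : ℕ, (if 0 ≤ j then ν j * Pfin c j 0 else 0) = 0 := by
      intro j
      rw [if_pos (Nat.zero_le j)]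
      rcases Nat.eq_zero_or_pos j with rfl | hj
      · rw [hν0, zero_mul]
      · rw [Pfin_zero hc hj, mul_zero]
    exact (tsum_congr e).trans tsum_zero
  have hFcFinpos : ∀ k : ℕ, 0 ≤ FcFin c μ k := by
    intro k
    rw [hFcFin k]
    refine tsum_nonneg fun j => ?_
    split_ifs
    · exact mul_nonneg (hνpos j) (Pfin_nonneg hc j k)
    · exact le_rfl
  have hFc0 : Fc c μ 0 = 0 := by
    show (if (0 : ℕ∞) = ⊤ then 1 - ∑' n : ℕ, FcFin c μ n
      else if (0 : ℕ∞) = 0 then 0 else FcFin c μ (0 : ℕ∞).toNat) = 0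
    rw [if_neg (by simp), if_pos rfl]
  have hFcTop : Fc c μ ⊤ = 0 := by
    have ht : (∑' n : ℕ, FcFin c μ n) = 1 := hFcFinSum.tsum_eq
    show (if (⊤ : ℕ∞) = ⊤ then 1 - ∑' n : ℕ, FcFin c μ n
      else if (⊤ : ℕ∞) = 0 then 0 else FcFin c μ (⊤ : ℕ∞).toNat) = 0
    rw [if_pos rfl, ht, sub_self]
  have hFccoe : ∀ n : ℕ, Fc c μ (n : ℕ∞) = FcFin c μ n := by
    intro n
    rcases Nat.eq_zero_or_pos n with rfl | hn
    · rw [Nat.cast_zero, hFc0, hFcFin0]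
    · have h1 : (n : ℕ∞) ≠ ⊤ := by simp
      have h2 : (n : ℕ∞) ≠ 0 := by
        simp [Nat.pos_iff_ne_zero.mp hn]
      show (if (n : ℕ∞) = ⊤ then 1 - ∑' n : ℕ, FcFin c μ n
        else if (n : ℕ∞) = 0 then 0 else FcFin c μ ((n : ℕ∞)).toNat) = FcFin c μ n
      rw [if_neg h1, if_neg h2, ENat.toNat_coe]
  have hmeanFc' : HasSum (fun n : ℕ => (n : ℝ) * Fc c μ (n : ℕ∞)) Sw := by
    have e : (fun n : ℕ => (n : ℝ) * Fc c μ (n : ℕ∞))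
        = fun n : ℕ => (n : ℝ) * FcFin c μ n := funext fun n => by rw [hFccoe n]
    rw [e]; exact hmeanFc
  refine ⟨⟨⟨?_, ?_, ?_⟩, hFcTop, hmeanFc'.summable⟩, ?_⟩
  · intro k
    rcases eq_or_ne k ⊤ with rfl | hk
    · rw [hFcTop]
    · obtain ⟨n, rfl⟩ := WithTop.ne_top_iff_exists.mp hk
      have : Fc c μ (n : ℕ∞) = FcFin c μ n := hFccoe n
      rw [show ((n : ℕ) : ℕ∞) = ((n : ℕ) : ℕ∞) from rfl] at this
      exact this ▸ hFcFinpos n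
  · exact hFc0
  · exact (enat_hasSum_iff hFcTop).mp
      (by rw [funext hFccoe]; exact hFcFinSum)
  · have e : distMean (Fc c μ) = Sw :=
      (tsum_congr fun n : ℕ => rfl).trans hmeanFc'.tsum_eq
    rw [e]
    exact hSwle
end

section
/- For every c > 0, the distribution F_c²(δ_∞) is supported on ℕ⁺ and has finite mean; consequently, for every μ ∈ S the distribution F_c²(μ) lies in S₁. -/
open Filter Topology Set

noncomputable section

namespace KMaux

def gK (c : ℝ) (l : ℕ) : ℝ := c / ((l : ℝ) * ((l : ℝ) - 1) / 2 + c)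

lemma half_nonneg (l : ℕ) : 0 ≤ (l : ℝ) * ((l : ℝ) - 1) / 2 := by
  rcases Nat.eq_zero_or_pos l with h | h
  · simp [h]
  · have : (1 : ℝ) ≤ l := by exact_mod_cast h
    nlinarith

variable {c : ℝ} (hc : 0 < c)
include hc

lemma den_pos (l : ℕ) : 0 < (l : ℝ) * ((l : ℝ) - 1) / 2 + c :=
  add_pos_of_nonneg_of_pos (half_nonneg l) hc

lemma kf_eq (l : ℕ) : kingmanFactor c l = 1 - gK c l := by
  have h := (den_pos hc l).ne'
  have key : kingmanFactor c l + gK c l = 1 := by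
    rw [kingmanFactor, gK, ← add_div, div_self h]
  linarith

lemma gK_pos (l : ℕ) : 0 < gK c l := div_pos hc (den_pos hc l)

lemma gK_le_one (l : ℕ) : gK c l ≤ 1 := by
  rw [gK, div_le_one (den_pos hc l)]
  linarith [half_nonneg l]

lemma kf_nonneg (l : ℕ) : 0 ≤ kingmanFactor c l := by
  rw [kf_eq hc]; linarith [gK_le_one hc l]

lemma kf_le_one (l : ℕ) : kingmanFactor c l ≤ 1 := by
  rw [kf_eq hc]; linarith [gK_pos hc l]

omit hc in
lemma kf_one : kingmanFactor c 1 = 0 := by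
  simp [kingmanFactor]

lemma gK_zero : gK c 0 = 1 := by
  have h : (0:ℝ) * ((0:ℝ)-1) / 2 = 0 := by ring
  simp [gK, h, div_self hc.ne']

lemma gK_le_telescope {l : ℕ} (hl : 2 ≤ l) :
    gK c l ≤ 2 * c * (1 / ((l : ℝ) - 1) - 1 / l) := by
  have hl1 : (2 : ℝ) ≤ l := by exact_mod_cast hl
  have hA : (0:ℝ) < (l : ℝ) * ((l : ℝ) - 1) / 2 := by nlinarith
  have h1 : gK c l ≤ c / ((l : ℝ) * ((l : ℝ) - 1) / 2) := by
    apply div_le_div_of_nonneg_left hc.le hA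
    linarith
  refine h1.trans (le_of_eq ?_)
  have e1 : (l:ℝ) - 1 ≠ 0 := by linarith
  have e2 : (l:ℝ) ≠ 0 := by linarith
  field_simp
  ring

/-- telescoping bound on sum of `gK` over `Icc (x+1) j`. -/
lemma sum_gK_le {x : ℕ} (hx : 1 ≤ x) : ∀ {j : ℕ}, x ≤ j →
    ∑ l ∈ Finset.Icc (x + 1) j, gK c l ≤ 2 * c * (1 / (x:ℝ) - 1 / (j:ℝ)) := by
  intro j hj
  induction j, hj using Nat.le_induction with
  | base => simp
  | succ j hj ih =>
    rw [Finset.sum_Icc_succ_top (by omega)]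
    have hj1 : (1:ℝ) ≤ (j:ℝ) := by exact_mod_cast hx.trans hj
    have h1 : gK c (j+1) ≤ 2 * c * (1 / (j:ℝ) - 1 / ((j:ℝ)+1)) := by
      have h := gK_le_telescope hc (l := j + 1) (by omega)
      push_cast at h
      convert h using 3 <;> push_cast <;> ring
    have h2 := ih
    have hcast : ((j+1 : ℕ) : ℝ) = (j:ℝ)+1 := by push_cast; ring
    rw [hcast]
    linarith

lemma sum_gK_le' {x : ℕ} (hx : 1 ≤ x) {j : ℕ} :
    ∑ l ∈ Finset.Icc (x + 1) j, gK c l ≤ 2 * c / (x:ℝ) := by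
  rcases le_or_gt (x : ℕ) j with h | h
  · refine (sum_gK_le hc hx h).trans ?_
    have hj0 : (0:ℝ) ≤ 2 * c * (1 / (j:ℝ)) := by positivity
    have he : 2*c/(x:ℝ) = 2*c*(1/(x:ℝ)) := by ring
    rw [he]
    nlinarith [hj0]
  · have h0 : Finset.Icc (x+1) j = ∅ := Finset.Icc_eq_empty (by omega)
    rw [h0, Finset.sum_empty]
    positivity

omit hc in
/-- Weierstrass product inequality. -/
lemma one_sub_sum_le_prod (g : ℕ → ℝ) (s : Finset ℕ) :
    (∀ l ∈ s, 0 ≤ g l) → (∀ l ∈ s, g l ≤ 1) →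
    1 - ∑ l ∈ s, g l ≤ ∏ l ∈ s, (1 - g l) := by
  classical
  induction s using Finset.induction_on with
  | empty => intro _ _; simp
  | insert _ _ ha ih =>
    rename_i a s
    intro h0 h1
    rw [Finset.sum_insert ha, Finset.prod_insert ha]
    have h0' : ∀ l ∈ s, 0 ≤ g l := fun l hl => h0 l (Finset.mem_insert_of_mem hl)
    have h1' : ∀ l ∈ s, g l ≤ 1 := fun l hl => h1 l (Finset.mem_insert_of_mem hl)
    have ih' := ih h0' h1'
    have hga : 0 ≤ g a := h0 a (Finset.mem_insert_self a s)
    have hga1 : g a ≤ 1 := h1 a (Finset.mem_insert_self a s)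
    have hs0 : 0 ≤ ∑ l ∈ s, g l := Finset.sum_nonneg h0'
    nlinarith [mul_le_mul_of_nonneg_left ih' (by linarith : (0:ℝ) ≤ 1 - g a)]


/-! ### Finite and infinite products of Kingman factors -/

def Qp (c : ℝ) (x j : ℕ) : ℝ := ∏ l ∈ Finset.Icc (x + 1) j, kingmanFactor c l

def Pinf (c : ℝ) (n : ℕ) : ℝ := ∏' l : ℕ, kingmanFactor c (n + 1 + l)

lemma Qp_nonneg (x j : ℕ) : 0 ≤ Qp c x j :=
  Finset.prod_nonneg fun l _ => kf_nonneg hc l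

lemma Qp_le_one (x j : ℕ) : Qp c x j ≤ 1 :=
  Finset.prod_le_one (fun l _ => kf_nonneg hc l) (fun l _ => kf_le_one hc l)

lemma Qp_of_le {x j : ℕ} (h : j ≤ x) : Qp c x j = 1 := by
  unfold Qp
  rw [Finset.Icc_eq_empty (by omega), Finset.prod_empty]

lemma Qp_zero {j : ℕ} (hj : 1 ≤ j) : Qp c 0 j = 0 :=
  Finset.prod_eq_zero (Finset.mem_Icc.mpr ⟨le_refl 1, hj⟩) kf_one

lemma Qp_succ_left {x j : ℕ} (h : x < j) :
    Qp c x j = kingmanFactor c (x + 1) * Qp c (x + 1) j := by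
  unfold Qp
  rw [← Finset.Ico_add_one_right_eq_Icc, ← Finset.Ico_add_one_right_eq_Icc,
    Finset.prod_eq_prod_Ico_succ_bot (by omega) (kingmanFactor c)]

lemma one_sub_Qp_le {x j : ℕ} (hx : 1 ≤ x) : 1 - Qp c x j ≤ 2 * c / (x:ℝ) := by
  have hW := one_sub_sum_le_prod (gK c) (Finset.Icc (x+1) j)
    (fun l _ => (gK_pos hc l).le) (fun l _ => gK_le_one hc l)
  have hprod : ∏ l ∈ Finset.Icc (x+1) j, (1 - gK c l) = Qp c x j := by
    unfold Qp
    exact Finset.prod_congr rfl fun l _ => (kf_eq hc l).symm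
  rw [hprod] at hW
  linarith [sum_gK_le' hc hx (j := j)]

/-- the partial products converge to the infinite product. -/
lemma hasProd_kf (n : ℕ) : HasProd (fun l : ℕ => kingmanFactor c (n + 1 + l))
    (⨅ s : Finset ℕ, ∏ l ∈ s, kingmanFactor c (n + 1 + l)) := by
  apply tendsto_atTop_ciInf
  · intro s t hst
    simp only []
    have h1 : ∏ l ∈ t, kingmanFactor c (n+1+l)
        = (∏ l ∈ s, kingmanFactor c (n+1+l)) * ∏ l ∈ t \ s, kingmanFactor c (n+1+l) := by
      rw [← Finset.prod_union (Finset.disjoint_sdiff)]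
      congr 1
      rw [Finset.union_sdiff_of_subset hst]
    rw [h1]
    have h2 : ∏ l ∈ t \ s, kingmanFactor c (n+1+l) ≤ 1 :=
      Finset.prod_le_one (fun l _ => kf_nonneg hc _) (fun l _ => kf_le_one hc _)
    have h3 : 0 ≤ ∏ l ∈ s, kingmanFactor c (n+1+l) :=
      Finset.prod_nonneg fun l _ => kf_nonneg hc _
    nlinarith
  · exact ⟨0, fun y hy => by
      obtain ⟨s, rfl⟩ := hy
      exact Finset.prod_nonneg fun l _ => kf_nonneg hc _⟩

lemma multipliable_kf (n : ℕ) : Multipliable (fun l : ℕ => kingmanFactor c (n + 1 + l)) :=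
  ⟨_, hasProd_kf hc n⟩

lemma tendsto_Qp_Pinf (n : ℕ) :
    Tendsto (fun m : ℕ => Qp c n (n + m)) atTop (𝓝 (Pinf c n)) := by
  have h := (multipliable_kf hc n).hasProd.tendsto_prod_nat
  have he : ∀ m : ℕ, Qp c n (n + m) = ∏ l ∈ Finset.range m, kingmanFactor c (n + 1 + l) := by
    intro m
    unfold Qp
    rw [← Finset.Ico_add_one_right_eq_Icc, Finset.prod_Ico_eq_prod_range,
      show n + m + 1 - (n+1) = m by omega]
  rw [funext he]
  exact h

lemma Pinf_nonneg (n : ℕ) : 0 ≤ Pinf c n :=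
  ge_of_tendsto' (tendsto_Qp_Pinf hc n) (fun m => Qp_nonneg hc _ _)

lemma Pinf_le_one (n : ℕ) : Pinf c n ≤ 1 :=
  le_of_tendsto' (tendsto_Qp_Pinf hc n) (fun m => Qp_le_one hc _ _)

lemma one_sub_Pinf_le {n : ℕ} (hn : 1 ≤ n) : 1 - Pinf c n ≤ 2 * c / (n:ℝ) := by
  have h : Pinf c n ≥ 1 - 2*c/(n:ℝ) :=
    ge_of_tendsto' (tendsto_Qp_Pinf hc n) (fun m => by linarith [one_sub_Qp_le hc hn (j := n+m)])
  linarith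

lemma Pinf_succ (n : ℕ) : Pinf c n = kingmanFactor c (n + 1) * Pinf c (n + 1) := by
  have h1 : Tendsto (fun m : ℕ => Qp c n (n + (m + 1))) atTop (𝓝 (Pinf c n)) :=
    (tendsto_Qp_Pinf hc n).comp (tendsto_add_atTop_nat 1)
  have h2 : Tendsto (fun m : ℕ => kingmanFactor c (n+1) * Qp c (n+1) (n+1+m)) atTop
      (𝓝 (kingmanFactor c (n+1) * Pinf c (n+1))) :=
    (tendsto_Qp_Pinf hc (n+1)).const_mul _
  have he : (fun m : ℕ => Qp c n (n + (m + 1)))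
      = fun m : ℕ => kingmanFactor c (n+1) * Qp c (n+1) (n+1+m) := by
    funext m
    rw [show n + (m+1) = n+1+m by omega]
    exact Qp_succ_left hc (by omega)
  rw [he] at h1
  exact tendsto_nhds_unique h1 h2

lemma Pinf_zero : Pinf c 0 = 0 := by
  rw [Pinf_succ hc 0, kf_one, zero_mul]

lemma tendsto_Pinf_one : Tendsto (fun n : ℕ => Pinf c n) atTop (𝓝 1) := by
  have hlow : Tendsto (fun n : ℕ => 1 - 2*c/(n:ℝ)) atTop (𝓝 1) := by
    have : Tendsto (fun n : ℕ => 2*c/(n:ℝ)) atTop (𝓝 0) := by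
      apply Tendsto.const_div_atTop
      exact tendsto_natCast_atTop_atTop
    simpa using (tendsto_const_nhds.sub this)
  apply tendsto_of_tendsto_of_tendsto_of_le_of_le' hlow tendsto_const_nhds
  · filter_upwards [eventually_ge_atTop 1] with n hn
    linarith [one_sub_Pinf_le hc hn]
  · filter_upwards with n
    exact Pinf_le_one hc n


/-! ### pK lemmas -/

lemma pK_coe (j k : ℕ) : pK c (j : ℕ∞) k = gK c k * Qp c k j := by
  unfold pK
  rw [if_neg (by simp : (j:ℕ∞) ≠ ⊤)]
  rfl

omit hc in
lemma pK_top (k : ℕ) : pK c ⊤ k = gK c k * Pinf c k := by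
  unfold pK
  rw [if_pos rfl]
  rfl

lemma pK_nonneg (j : ℕ∞) (k : ℕ) : 0 ≤ pK c j k := by
  induction j using ENat.recTopCoe with
  | top => rw [pK_top]; exact mul_nonneg (gK_pos hc k).le (Pinf_nonneg hc k)
  | coe j => rw [pK_coe hc]; exact mul_nonneg (gK_pos hc k).le (Qp_nonneg hc k j)

lemma pK_le_gK (j : ℕ∞) (k : ℕ) : pK c j k ≤ gK c k := by
  induction j using ENat.recTopCoe with
  | top =>
    rw [pK_top]
    calc gK c k * Pinf c k ≤ gK c k * 1 :=
          mul_le_mul_of_nonneg_left (Pinf_le_one hc k) (gK_pos hc k).le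
      _ = gK c k := mul_one _
  | coe j =>
    rw [pK_coe hc]
    calc gK c k * Qp c k j ≤ gK c k * 1 :=
          mul_le_mul_of_nonneg_left (Qp_le_one hc k j) (gK_pos hc k).le
      _ = gK c k := mul_one _

lemma pK_zero {j : ℕ∞} (hj : 1 ≤ j) : pK c j 0 = 0 := by
  induction j using ENat.recTopCoe with
  | top => rw [pK_top, Pinf_zero hc, mul_zero]
  | coe j =>
    have hj' : 1 ≤ j := by exact_mod_cast hj
    rw [pK_coe hc, Qp_zero hc hj', mul_zero]

lemma sum_pK_Icc_coe {j : ℕ} (hj : 1 ≤ j) {x : ℕ} (hx : x ≤ j) :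
    ∑ k ∈ Finset.Icc 1 x, pK c (j : ℕ∞) k = Qp c x j := by
  induction x with
  | zero =>
    rw [Qp_zero hc hj]
    simp
  | succ x ih =>
    rw [Finset.sum_Icc_succ_top (by omega : 1 ≤ x+1), ih (by omega), pK_coe hc,
      Qp_succ_left hc (by omega : x < j), kf_eq hc]
    ring

lemma sum_pK_Icc_top (x : ℕ) :
    ∑ k ∈ Finset.Icc 1 x, pK c ⊤ k = Pinf c x := by
  induction x with
  | zero => rw [Pinf_zero hc]; simp
  | succ x ih =>
    rw [Finset.sum_Icc_succ_top (by omega : 1 ≤ x+1), ih, pK_top,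
      Pinf_succ hc x, kf_eq hc]
    ring

lemma sum_pK_total {j : ℕ} (hj : 1 ≤ j) :
    ∑ k ∈ Finset.Icc 1 j, pK c (j : ℕ∞) k = 1 := by
  rw [sum_pK_Icc_coe hc hj le_rfl, Qp_of_le hc le_rfl]

lemma hasSum_pK {j : ℕ∞} (hj : 1 ≤ j) :
    HasSum (fun k : ℕ => if (k : ℕ∞) ≤ j then pK c j k else 0) 1 := by
  induction j using ENat.recTopCoe with
  | top =>
    have hval : ∀ k : ℕ, (if (k:ℕ∞) ≤ (⊤:ℕ∞) then pK c ⊤ k else 0) = pK c ⊤ k :=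
      fun k => if_pos le_top
    rw [funext hval]
    rw [hasSum_iff_tendsto_nat_of_nonneg (fun k => pK_nonneg hc ⊤ k) 1]
    rw [← tendsto_add_atTop_iff_nat 1]
    have he : ∀ x : ℕ, ∑ i ∈ Finset.range (x + 1), pK c ⊤ i = Pinf c x := by
      intro x
      rw [Finset.range_eq_Ico, Finset.sum_eq_sum_Ico_succ_bot (by omega),
        Finset.Ico_add_one_right_eq_Icc, sum_pK_Icc_top hc, pK_zero hc le_top, zero_add]
    rw [funext he]
    exact tendsto_Pinf_one hc
  | coe j =>
    have hj' : 1 ≤ j := by exact_mod_cast hj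
    have hvan : ∀ k : ℕ, k ∉ Finset.range (j+1) →
        (if (k:ℕ∞) ≤ (j:ℕ∞) then pK c (j:ℕ∞) k else 0) = 0 := by
      intro k hk
      rw [if_neg]
      simp only [Finset.mem_range, not_lt] at hk
      exact fun hle => absurd (by exact_mod_cast hle : k ≤ j) (by omega)
    have hs : HasSum _ _ := hasSum_sum_of_ne_finset_zero hvan
    have hval : ∑ k ∈ Finset.range (j+1),
        (if (k:ℕ∞) ≤ (j:ℕ∞) then pK c (j:ℕ∞) k else 0) = 1 := by
      rw [Finset.range_eq_Ico, Finset.sum_eq_sum_Ico_succ_bot (by omega),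
        Finset.Ico_add_one_right_eq_Icc]
      rw [if_pos (by exact_mod_cast Nat.zero_le j), pK_zero hc (by exact_mod_cast hj'),
        zero_add]
      rw [Finset.sum_congr rfl (fun k hk => if_pos
        (by exact_mod_cast (Finset.mem_Icc.mp hk).2))]
      exact sum_pK_total hc hj'
    rwa [hval] at hs


/-! ### ℕ∞ infrastructure -/

omit hc in
lemma eq_top_of_not_range {x : ℕ∞} (hx : x ∉ Set.range ((↑) : ℕ → ℕ∞)) : x = ⊤ := by
  induction x using ENat.recTopCoe with
  | top => rfl
  | coe n => exact absurd ⟨n, rfl⟩ hx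

omit hc in
lemma hasSum_enat_iff {h : ℕ∞ → ℝ} (htop : h ⊤ = 0) {a : ℝ} :
    HasSum (fun n : ℕ => h n) a ↔ HasSum h a := by
  refine Function.Injective.hasSum_iff Nat.cast_injective ?_
  intro x hx
  rw [eq_top_of_not_range hx, htop]

omit hc in
lemma summable_enat_iff {h : ℕ∞ → ℝ} (htop : h ⊤ = 0) :
    Summable (fun n : ℕ => h n) ↔ Summable h := by
  refine Function.Injective.summable_iff Nat.cast_injective ?_
  intro x hx
  rw [eq_top_of_not_range hx, htop]

/-! ### conv lemmas -/

omit hc in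
lemma summable_mulpair {μ ν : ℕ∞ → ℝ} (hμ : IsDist μ) (hν : IsDist ν) :
    Summable (fun p : ℕ∞ × ℕ∞ => μ p.1 * ν p.2) :=
  hμ.2.2.summable.mul_of_nonneg hν.2.2.summable (fun p => hμ.1 p) (fun p => hν.1 p)

omit hc in
lemma conv_eq_fiber (μ ν : ℕ∞ → ℝ) (k : ℕ∞) :
    conv μ ν k
      = ∑' p : ((fun p : ℕ∞ × ℕ∞ => p.1 + p.2) ⁻¹' {k}),
          μ (p : ℕ∞ × ℕ∞).1 * ν (p : ℕ∞ × ℕ∞).2 := by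
  classical
  have h1 : conv μ ν k = ∑' q : ℕ∞ × ℕ∞,
      Set.indicator ((fun p : ℕ∞ × ℕ∞ => p.1 + p.2) ⁻¹' {k})
        (fun q : ℕ∞ × ℕ∞ => μ q.1 * ν q.2) q := by
    apply tsum_congr
    intro q
    rw [Set.indicator_apply]
    simp only [Set.mem_preimage, Set.mem_singleton_iff]
  rw [h1]
  exact (tsum_subtype _ _).symm

omit hc in
lemma conv_nonneg_apply {μ ν : ℕ∞ → ℝ} (hμ : IsDist μ) (hν : IsDist ν) (k : ℕ∞) :
    0 ≤ conv μ ν k := by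
  apply tsum_nonneg
  intro p
  split_ifs
  · exact mul_nonneg (hμ.1 _) (hν.1 _)
  · exact le_refl 0

omit hc in
lemma hasSum_conv {μ ν : ℕ∞ → ℝ} (hμ : IsDist μ) (hν : IsDist ν) :
    HasSum (conv μ ν) 1 := by
  have hF := summable_mulpair hμ hν
  have h1 : ∑' p : ℕ∞ × ℕ∞, μ p.1 * ν p.2 = 1 := by
    rw [Summable.tsum_prod' hF (fun b => hF.prod_factor b)]
    have hin : ∀ b : ℕ∞, ∑' c : ℕ∞, μ b * ν c = μ b := by
      intro b
      rw [tsum_mul_left, hν.2.2.tsum_eq, mul_one]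
    rw [tsum_congr hin, hμ.2.2.tsum_eq]
  have hfib := hF.hasSum.tsum_fiberwise (fun p => p.1 + p.2)
  rw [h1] at hfib
  apply hfib.congr_fun
  intro k
  exact conv_eq_fiber μ ν k

omit hc in
lemma conv_zero {μ ν : ℕ∞ → ℝ} (hμ : IsDist μ) (hν : IsDist ν) : conv μ ν 0 = 0 := by
  have h : ∀ p : ℕ∞ × ℕ∞, (if p.1 + p.2 = (0:ℕ∞) then μ p.1 * ν p.2 else 0) = 0 := by
    intro p
    split_ifs with h
    · obtain ⟨h1, _⟩ := add_eq_zero.mp h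
      rw [h1, hμ.2.1, zero_mul]
    · rfl
  calc conv μ ν 0 = ∑' p : ℕ∞ × ℕ∞, (0:ℝ) := tsum_congr h
    _ = 0 := tsum_zero

omit hc in
lemma conv_one {μ ν : ℕ∞ → ℝ} (hμ : IsDist μ) (hν : IsDist ν) : conv μ ν 1 = 0 := by
  have h : ∀ p : ℕ∞ × ℕ∞, (if p.1 + p.2 = (1:ℕ∞) then μ p.1 * ν p.2 else 0) = 0 := by
    intro p
    obtain ⟨a, b⟩ := p
    split_ifs with h
    · induction a using ENat.recTopCoe with
      | top => simp at h
      | coe a =>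
        induction b using ENat.recTopCoe with
        | top => simp at h
        | coe b =>
          have h' : (a:ℕ∞) + (b:ℕ∞) = 1 := h
          have hab : a + b = 1 := by exact_mod_cast h'
          rcases (by omega : a = 0 ∨ b = 0) with h0 | h0
          · subst h0; rw [show ((0:ℕ):ℕ∞) = 0 by simp, hμ.2.1, zero_mul]
          · subst h0; rw [show ((0:ℕ):ℕ∞) = 0 by simp, hν.2.1, mul_zero]
    · rfl
  calc conv μ ν 1 = ∑' p : ℕ∞ × ℕ∞, (0:ℝ) := tsum_congr h
    _ = 0 := tsum_zero

omit hc in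
lemma conv_top {μ ν : ℕ∞ → ℝ} (hμt : μ ⊤ = 0) (hνt : ν ⊤ = 0) : conv μ ν ⊤ = 0 := by
  have h : ∀ p : ℕ∞ × ℕ∞, (if p.1 + p.2 = (⊤:ℕ∞) then μ p.1 * ν p.2 else 0) = 0 := by
    intro p
    split_ifs with h
    · rcases WithTop.add_eq_top.mp h with h0 | h0
      · rw [show p.1 = (⊤:ℕ∞) from h0, hμt, zero_mul]
      · rw [show p.2 = (⊤:ℕ∞) from h0, hνt, mul_zero]
    · rfl
  calc conv μ ν ⊤ = ∑' p : ℕ∞ × ℕ∞, (0:ℝ) := tsum_congr h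
    _ = 0 := tsum_zero


/-! ### FcFin and Fc -/

section FcLemmas

variable {μ : ℕ∞ → ℝ} (hμ : IsDist μ)
include hμ

lemma summable_FcFin_summand (k : ℕ) :
    Summable (fun j : ℕ∞ => if (k : ℕ∞) ≤ j then conv μ μ j * pK c j k else 0) := by
  apply Summable.of_nonneg_of_le (f := fun j => conv μ μ j * gK c k)
  · intro j
    split_ifs
    · exact mul_nonneg (conv_nonneg_apply hμ hμ j) (pK_nonneg hc j k)
    · exact le_refl 0
  · intro j
    split_ifs
    · exact mul_le_mul_of_nonneg_left (pK_le_gK hc j k) (conv_nonneg_apply hμ hμ j)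
    · exact mul_nonneg (conv_nonneg_apply hμ hμ j) (gK_pos hc k).le
  · exact (hasSum_conv hμ hμ).summable.mul_right (gK c k)

lemma FcFin_nonneg (k : ℕ) : 0 ≤ FcFin c μ k := by
  apply tsum_nonneg
  intro j
  split_ifs
  · exact mul_nonneg (conv_nonneg_apply hμ hμ j) (pK_nonneg hc j k)
  · exact le_refl 0

lemma FcFin_le_gK (k : ℕ) : FcFin c μ k ≤ gK c k := by
  have h1 : FcFin c μ k ≤ ∑' j : ℕ∞, conv μ μ j * gK c k := by
    apply Summable.tsum_le_tsum _ (summable_FcFin_summand hc hμ k)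
      ((hasSum_conv hμ hμ).summable.mul_right (gK c k))
    intro j
    split_ifs
    · exact mul_le_mul_of_nonneg_left (pK_le_gK hc j k) (conv_nonneg_apply hμ hμ j)
    · exact mul_nonneg (conv_nonneg_apply hμ hμ j) (gK_pos hc k).le
  rwa [tsum_mul_right, (hasSum_conv hμ hμ).tsum_eq, one_mul] at h1

lemma FcFin_zero : FcFin c μ 0 = 0 := by
  have h : ∀ j : ℕ∞, (if ((0:ℕ) : ℕ∞) ≤ j then conv μ μ j * pK c j 0 else 0) = 0 := by
    intro j
    rw [if_pos (by exact_mod_cast (zero_le : (0:ℕ∞) ≤ j))]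
    rcases eq_or_ne j 0 with h0 | h0
    · rw [h0, conv_zero hμ hμ, zero_mul]
    · rw [pK_zero hc (ENat.one_le_iff_ne_zero.mpr h0), mul_zero]
  calc FcFin c μ 0 = ∑' _j : ℕ∞, (0:ℝ) := tsum_congr h
    _ = 0 := tsum_zero

lemma hasSum_G_row (j : ℕ∞) :
    HasSum (fun k : ℕ => if (k : ℕ∞) ≤ j then conv μ μ j * pK c j k else 0)
      (conv μ μ j) := by
  rcases eq_or_ne j 0 with h0 | h0
  · subst h0
    have h : ∀ k : ℕ, (if (k : ℕ∞) ≤ 0 then conv μ μ 0 * pK c 0 k else 0) = 0 := by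
      intro k
      split_ifs with h
      · rw [conv_zero hμ hμ, zero_mul]
      · rfl
    rw [funext h, conv_zero hμ hμ]
    exact hasSum_zero
  · have hj : 1 ≤ j := ENat.one_le_iff_ne_zero.mpr h0
    have h := (hasSum_pK hc hj).mul_left (conv μ μ j)
    rw [mul_one] at h
    apply h.congr_fun
    intro k
    rw [mul_ite, mul_zero]

lemma summable_G :
    Summable (fun q : ℕ∞ × ℕ =>
      if (q.2 : ℕ∞) ≤ q.1 then conv μ μ q.1 * pK c q.1 q.2 else 0) := by
  apply (summable_prod_of_nonneg ?_).mpr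
  constructor
  · exact fun j => (hasSum_G_row hc hμ j).summable
  · apply Summable.congr (hasSum_conv hμ hμ).summable
    intro j
    exact ((hasSum_G_row hc hμ j).tsum_eq).symm
  · intro q
    simp only []
    split_ifs
    · exact mul_nonneg (conv_nonneg_apply hμ hμ _) (pK_nonneg hc _ _)
    · exact le_refl 0

lemma hasSum_FcFin : HasSum (fun k : ℕ => FcFin c μ k) 1 := by
  have hG := summable_G hc hμ
  have hsumm : Summable (fun k : ℕ => FcFin c μ k) := by
    have h := hG.prod_symm.prod
    apply h.congr
    intro k
    rfl
  have hval : ∑' k : ℕ, FcFin c μ k = 1 := by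
    have hcomm := Summable.tsum_comm'
      (f := fun (j : ℕ∞) (k : ℕ) => if (k : ℕ∞) ≤ j then conv μ μ j * pK c j k else 0)
      hG (fun j => (hasSum_G_row hc hμ j).summable)
      (fun k => summable_FcFin_summand hc hμ k)
    calc ∑' k : ℕ, FcFin c μ k
        = ∑' (k : ℕ) (j : ℕ∞), (if (k : ℕ∞) ≤ j then conv μ μ j * pK c j k else 0) := rfl
      _ = ∑' (j : ℕ∞) (k : ℕ), (if (k : ℕ∞) ≤ j then conv μ μ j * pK c j k else 0) := hcomm
      _ = ∑' j : ℕ∞, conv μ μ j := tsum_congr fun j => (hasSum_G_row hc hμ j).tsum_eq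
      _ = 1 := (hasSum_conv hμ hμ).tsum_eq
  have := hsumm.hasSum
  rwa [hval] at this

lemma Fc_top : Fc c μ ⊤ = 0 := by
  show (if (⊤:ℕ∞) = ⊤ then 1 - ∑' n : ℕ, FcFin c μ n else _) = 0
  rw [if_pos rfl, (hasSum_FcFin hc hμ).tsum_eq, sub_self]

omit hμ hc in
lemma Fc_zero : Fc c μ 0 = 0 := by
  show (if (0:ℕ∞) = ⊤ then _ else if (0:ℕ∞) = 0 then (0:ℝ) else _) = 0
  rw [if_neg (by simp), if_pos rfl]

lemma Fc_coe (n : ℕ) : Fc c μ (n : ℕ∞) = FcFin c μ n := by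
  rcases eq_or_ne n 0 with h0 | h0
  · subst h0
    rw [show ((0:ℕ):ℕ∞) = 0 by simp, Fc_zero, FcFin_zero hc hμ]
  · show (if (n:ℕ∞) = ⊤ then _ else if (n:ℕ∞) = 0 then (0:ℝ) else FcFin c μ (n:ℕ∞).toNat)
        = FcFin c μ n
    rw [if_neg (by simp), if_neg (by exact_mod_cast h0), ENat.toNat_coe]

lemma Fc_nonneg (k : ℕ∞) : 0 ≤ Fc c μ k := by
  induction k using ENat.recTopCoe with
  | top => rw [Fc_top hc hμ]
  | coe n => rw [Fc_coe hc hμ]; exact FcFin_nonneg hc hμ n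

lemma hasSum_Fc : HasSum (Fc c μ) 1 := by
  rw [← hasSum_enat_iff (Fc_top hc hμ)]
  exact (hasSum_FcFin hc hμ).congr_fun (fun n => Fc_coe hc hμ n)

lemma Fc_isDist : IsDist (Fc c μ) :=
  ⟨Fc_nonneg hc hμ, Fc_zero, hasSum_Fc hc hμ⟩

lemma Fc_le_gK (n : ℕ) : Fc c μ (n : ℕ∞) ≤ gK c n := by
  rw [Fc_coe hc hμ]
  exact FcFin_le_gK hc hμ n

end FcLemmas


/-! ### square-root estimates -/

omit hc in
lemma sqrt_add_le' {a b : ℝ} (ha : 0 ≤ a) (hb : 0 ≤ b) :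
    Real.sqrt (a + b) ≤ Real.sqrt a + Real.sqrt b := by
  have h : a + b ≤ (Real.sqrt a + Real.sqrt b)^2 := by
    nlinarith [Real.sq_sqrt ha, Real.sq_sqrt hb, Real.sqrt_nonneg a, Real.sqrt_nonneg b,
      mul_nonneg (Real.sqrt_nonneg a) (Real.sqrt_nonneg b)]
  calc Real.sqrt (a + b) ≤ Real.sqrt ((Real.sqrt a + Real.sqrt b)^2) := Real.sqrt_le_sqrt h
    _ = Real.sqrt a + Real.sqrt b := Real.sqrt_sq (by positivity)

omit hc in
lemma le_sqrt_of_le_one_of_le {a t : ℝ} (ht : 0 ≤ t) (h1 : a ≤ 1) (h2 : a ≤ t) :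
    a ≤ Real.sqrt t := by
  nlinarith [Real.sq_sqrt ht, Real.sqrt_nonneg t, sq_nonneg (Real.sqrt t - 1)]

omit hc in
lemma sum_inv_sqrt_le : ∀ N : ℕ, ∑ x ∈ Finset.range N, 1 / Real.sqrt ((x:ℝ) + 1)
    ≤ 2 * Real.sqrt N := by
  intro N
  induction N with
  | zero => simp
  | succ N ih =>
    rw [Finset.sum_range_succ]
    have ha : (0:ℝ) ≤ (N:ℝ) + 1 := by positivity
    have hb : (0:ℝ) ≤ (N:ℝ) := by positivity
    have hpos : 0 < Real.sqrt ((N:ℝ) + 1) := Real.sqrt_pos.mpr (by positivity)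
    have hkey : 1 / Real.sqrt ((N:ℝ) + 1)
        ≤ 2 * Real.sqrt ((N:ℝ)+1) - 2 * Real.sqrt (N:ℝ) := by
      rw [div_le_iff₀ hpos]
      nlinarith [Real.sq_sqrt ha, Real.sq_sqrt hb,
        sq_nonneg (Real.sqrt ((N:ℝ)+1) - Real.sqrt (N:ℝ))]
    have hc1 : (((N+1:ℕ)):ℝ) = (N:ℝ)+1 := by push_cast; ring
    rw [hc1]
    linarith

/-! ### the mean bound for finitely many lineages -/

lemma mean_bound (j : ℕ) :
    ∑ k ∈ Finset.Icc 1 j, (k:ℝ) * pK c (j:ℕ∞) k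
      ≤ 1 + 2 * Real.sqrt (2*c) * Real.sqrt j := by
  rcases Nat.eq_zero_or_pos j with hj0 | hj
  · subst hj0
    simp
  -- Step 1 : Abel summation
  have habel : ∑ k ∈ Finset.Icc 1 j, (k:ℝ) * pK c (j:ℕ∞) k
      = ∑ x ∈ Finset.range j, (1 - Qp c x j) := by
    have h1 : ∀ k ∈ Finset.Icc 1 j, (k:ℝ) * pK c (j:ℕ∞) k
        = ∑ x ∈ Finset.range j, (if x < k then pK c (j:ℕ∞) k else 0) := by
      intro k hk
      obtain ⟨hk1, hk2⟩ := Finset.mem_Icc.mp hk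
      have hfil : Finset.filter (fun x => x < k) (Finset.range j) = Finset.range k := by
        ext x
        simp only [Finset.mem_filter, Finset.mem_range]
        omega
      rw [← Finset.sum_filter, hfil, Finset.sum_const, Finset.card_range, nsmul_eq_mul]
    have h2 : ∀ x ∈ Finset.range j,
        ∑ k ∈ Finset.Icc 1 j, (if x < k then pK c (j:ℕ∞) k else 0) = 1 - Qp c x j := by
      intro x hx
      have hxj : x < j := Finset.mem_range.mp hx
      have hfil : Finset.filter (fun k => x < k) (Finset.Icc 1 j)
          = Finset.Icc (x+1) j := by
        ext k
        simp only [Finset.mem_filter, Finset.mem_Icc]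
        omega
      rw [← Finset.sum_filter, hfil]
      have hsplit : ∑ k ∈ Finset.Icc 1 x, pK c (j:ℕ∞) k
          + ∑ k ∈ Finset.Icc (x+1) j, pK c (j:ℕ∞) k
          = ∑ k ∈ Finset.Icc 1 j, pK c (j:ℕ∞) k := by
        rw [← Finset.Ico_add_one_right_eq_Icc, ← Finset.Ico_add_one_right_eq_Icc (a := x+1), ← Finset.Ico_add_one_right_eq_Icc (a := 1) (b := j)]
        exact Finset.sum_Ico_consecutive _ (by omega) (by omega)
      rw [sum_pK_Icc_coe hc hj hxj.le, sum_pK_total hc hj] at hsplit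
      linarith
    rw [Finset.sum_congr rfl h1, Finset.sum_comm, Finset.sum_congr rfl h2]
  rw [habel]
  -- Step 2 : bound the tail sums
  obtain ⟨n, rfl⟩ : ∃ n, j = n + 1 := ⟨j-1, by omega⟩
  rw [Finset.sum_range_succ' (fun x => 1 - Qp c x (n+1)) n]
  have h0 : 1 - Qp c 0 (n+1) ≤ 1 := by linarith [Qp_nonneg hc 0 (n+1)]
  have hterm : ∀ i ∈ Finset.range n,
      1 - Qp c (i+1) (n+1) ≤ Real.sqrt (2*c) * (1 / Real.sqrt ((i:ℝ)+1)) := by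
    intro i _
    have e1 : 1 - Qp c (i+1) (n+1) ≤ 1 := by linarith [Qp_nonneg hc (i+1) (n+1)]
    have e2 : 1 - Qp c (i+1) (n+1) ≤ 2*c/((i:ℝ)+1) := by
      have := one_sub_Qp_le hc (x := i+1) (by omega) (j := n+1)
      push_cast at this
      linarith
    have e3 : Real.sqrt (2*c/((i:ℝ)+1)) = Real.sqrt (2*c) * (1/Real.sqrt ((i:ℝ)+1)) := by
      rw [Real.sqrt_div (by positivity) ((i:ℝ)+1)]
      ring
    rw [← e3]
    exact le_sqrt_of_le_one_of_le (by positivity) e1 e2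
  have hsum1 : ∑ i ∈ Finset.range n, (1 - Qp c (i+1) (n+1))
      ≤ Real.sqrt (2*c) * (2 * Real.sqrt n) := by
    calc ∑ i ∈ Finset.range n, (1 - Qp c (i+1) (n+1))
        ≤ ∑ i ∈ Finset.range n, Real.sqrt (2*c) * (1 / Real.sqrt ((i:ℝ)+1)) :=
          Finset.sum_le_sum hterm
      _ = Real.sqrt (2*c) * ∑ i ∈ Finset.range n, 1 / Real.sqrt ((i:ℝ)+1) := by
          rw [Finset.mul_sum]
      _ ≤ Real.sqrt (2*c) * (2 * Real.sqrt n) :=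
          mul_le_mul_of_nonneg_left (sum_inv_sqrt_le n) (Real.sqrt_nonneg _)
  have hmono : Real.sqrt (n:ℝ) ≤ Real.sqrt (((n+1:ℕ)):ℝ) := by
    apply Real.sqrt_le_sqrt
    push_cast
    linarith
  have hnn : 0 ≤ Real.sqrt (2*c) := Real.sqrt_nonneg _
  nlinarith [hsum1, h0, hmono, mul_le_mul_of_nonneg_left hmono hnn]

/-! ### summability of √k · gK k -/

lemma summable_sqrt_gK : Summable (fun k : ℕ => Real.sqrt k * gK c k) := by
  rw [← summable_nat_add_iff 2]
  have base : Summable (fun n : ℕ => 1/((n:ℝ)+2)^((3:ℝ)/2)) := by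
    have h := Real.summable_one_div_nat_rpow.mpr (show (1:ℝ) < 3/2 by norm_num)
    have h2 := (summable_nat_add_iff 2).mpr h
    apply h2.congr
    intro n
    push_cast
    ring_nf
  apply Summable.of_nonneg_of_le
    (f := fun n : ℕ => 1/((n:ℝ)+2)^((3:ℝ)/2) * (4*c)) ?_ ?_ (base.mul_right (4*c))
  · intro k
    exact mul_nonneg (Real.sqrt_nonneg _) (gK_pos hc _).le
  · intro k
    show Real.sqrt ((k+2:ℕ):ℝ) * gK c (k+2) ≤ 1/((k:ℝ)+2)^((3:ℝ)/2) * (4*c)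
    have hcast : ((k+2:ℕ):ℝ) = (k:ℝ) + 2 := by push_cast; ring
    have hl2 : (2:ℝ) ≤ (k:ℝ) + 2 := by have := Nat.cast_nonneg (α := ℝ) k; linarith
    have hlp : (0:ℝ) < (k:ℝ) + 2 := by positivity
    -- gK c (k+2) ≤ 4c / ((k:ℝ)+2)²
    have hA : (0:ℝ) < ((k+2:ℕ):ℝ)*(((k+2:ℕ):ℝ)-1)/2 := by rw [hcast]; nlinarith
    have hg1 : gK c (k+2) ≤ c / (((k+2:ℕ):ℝ)*(((k+2:ℕ):ℝ)-1)/2) :=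
      div_le_div_of_nonneg_left hc.le hA (by linarith)
    have h2l : 2*((k:ℝ)+2) ≤ ((k:ℝ)+2)^2 := by nlinarith
    have hg2 : c / (((k+2:ℕ):ℝ)*(((k+2:ℕ):ℝ)-1)/2) ≤ 4*c/((k:ℝ)+2)^2 := by
      rw [div_le_div_iff₀ hA (by positivity), hcast]
      nlinarith [mul_le_mul_of_nonneg_left h2l hc.le]
    have hg : gK c (k+2) ≤ 4*c/((k:ℝ)+2)^2 := hg1.trans hg2
    have hsq : Real.sqrt ((k:ℝ)+2) * Real.sqrt ((k:ℝ)+2) = (k:ℝ)+2 :=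
      Real.mul_self_sqrt hlp.le
    have hrpow : ((k:ℝ)+2)^((3:ℝ)/2) = ((k:ℝ)+2) * Real.sqrt ((k:ℝ)+2) := by
      rw [show (3:ℝ)/2 = 1 + 1/2 by norm_num, Real.rpow_add hlp, Real.rpow_one,
        ← Real.sqrt_eq_rpow]
    have hrpos : (0:ℝ) < ((k:ℝ)+2) * Real.sqrt ((k:ℝ)+2) :=
      mul_pos hlp (Real.sqrt_pos.mpr hlp)
    rw [hcast, hrpow, one_div, inv_mul_eq_div, le_div_iff₀ hrpos]
    have hgoal : Real.sqrt ((k:ℝ)+2) * gK c (k+2) * (((k:ℝ)+2) * Real.sqrt ((k:ℝ)+2))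
        = gK c (k+2) * (((k:ℝ)+2) * ((k:ℝ)+2)) := by
      have hre : Real.sqrt ((k:ℝ)+2) * gK c (k+2) * (((k:ℝ)+2) * Real.sqrt ((k:ℝ)+2))
          = gK c (k+2) * ((Real.sqrt ((k:ℝ)+2) * Real.sqrt ((k:ℝ)+2)) * ((k:ℝ)+2)) := by
        ring
      rw [hre, hsq]
    rw [hgoal]
    calc gK c (k+2) * (((k:ℝ)+2) * ((k:ℝ)+2))
        ≤ 4*c/((k:ℝ)+2)^2 * (((k:ℝ)+2) * ((k:ℝ)+2)) :=
          mul_le_mul_of_nonneg_right hg (by positivity)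
      _ = 4*c := by field_simp

/-! ### fiber sums -/

omit hc in
lemma tsum_fiber_eq (F : ℕ∞ × ℕ∞ → ℝ) (k : ℕ∞) :
    (∑' p : ((fun p : ℕ∞ × ℕ∞ => p.1 + p.2) ⁻¹' {k}), F (p : ℕ∞ × ℕ∞))
      = ∑' p : ℕ∞ × ℕ∞, if p.1 + p.2 = k then F p else 0 := by
  classical
  have h1 : (∑' q : ℕ∞ × ℕ∞,
      Set.indicator ((fun p : ℕ∞ × ℕ∞ => p.1 + p.2) ⁻¹' {k}) F q)
      = ∑' p : ℕ∞ × ℕ∞, if p.1 + p.2 = k then F p else 0 := by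
    apply tsum_congr
    intro q
    rw [Set.indicator_apply]
    simp only [Set.mem_preimage, Set.mem_singleton_iff]
  rw [← h1]
  exact tsum_subtype _ _

/-! ### finite mean of the second iterate -/

section Mean

variable {ν : ℕ∞ → ℝ} (hν : IsDist ν) (hνtop : ν ⊤ = 0)
  (hνle : ∀ n : ℕ, ν (n : ℕ∞) ≤ gK c n)

include hν hνle in
lemma summable_sqrt_nu : Summable (fun k : ℕ => Real.sqrt k * ν (k : ℕ∞)) := by
  apply Summable.of_nonneg_of_le (f := fun k : ℕ => Real.sqrt k * gK c k)
    (fun k => mul_nonneg (Real.sqrt_nonneg _) (hν.1 _))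
    (fun k => mul_le_mul_of_nonneg_left (hνle k) (Real.sqrt_nonneg _))
    (summable_sqrt_gK hc)

include hν hνtop hνle in
lemma summable_A : Summable (fun a : ℕ∞ => Real.sqrt a.toNat * ν a) := by
  apply (summable_enat_iff (by rw [hνtop, mul_zero])).mp
  apply (summable_sqrt_nu hc hν hνle).congr
  intro n
  rw [ENat.toNat_coe]

include hν hνtop hνle in
lemma summable_W : Summable (fun p : ℕ∞ × ℕ∞ =>
    (Real.sqrt p.1.toNat + Real.sqrt p.2.toNat) * (ν p.1 * ν p.2)) := by
  have hA := summable_A hc hν hνtop hνle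
  have h1 : Summable (fun p : ℕ∞ × ℕ∞ =>
      (Real.sqrt p.1.toNat * ν p.1) * ν p.2) :=
    hA.mul_of_nonneg hν.2.2.summable
      (fun a => mul_nonneg (Real.sqrt_nonneg _) (hν.1 a)) (fun a => hν.1 a)
  have h2 : Summable (fun p : ℕ∞ × ℕ∞ =>
      ν p.1 * (Real.sqrt p.2.toNat * ν p.2)) :=
    hν.2.2.summable.mul_of_nonneg hA (fun a => hν.1 a)
      (fun a => mul_nonneg (Real.sqrt_nonneg _) (hν.1 a))
  apply (h1.add h2).congr
  intro p
  ring

include hν hνtop hνle in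
lemma summable_ite_W (j : ℕ) : Summable (fun p : ℕ∞ × ℕ∞ =>
    if p.1 + p.2 = (j:ℕ∞) then
      (Real.sqrt p.1.toNat + Real.sqrt p.2.toNat) * (ν p.1 * ν p.2) else 0) := by
  have hW := summable_W hc hν hνtop hνle
  apply Summable.of_nonneg_of_le (f := fun p : ℕ∞ × ℕ∞ =>
      (Real.sqrt p.1.toNat + Real.sqrt p.2.toNat) * (ν p.1 * ν p.2)) ?_ ?_ hW
  · intro p
    split_ifs
    · exact mul_nonneg (by positivity) (mul_nonneg (hν.1 _) (hν.1 _))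
    · exact le_refl 0
  · intro p
    split_ifs
    · exact le_refl _
    · exact mul_nonneg (by positivity) (mul_nonneg (hν.1 _) (hν.1 _))

include hν hνtop hνle in
lemma summable_sqrt_conv :
    Summable (fun j : ℕ => Real.sqrt j * conv ν ν (j : ℕ∞)) := by
  have hW := summable_W hc hν hνtop hνle
  have hWnn : ∀ p : ℕ∞ × ℕ∞,
      0 ≤ (Real.sqrt p.1.toNat + Real.sqrt p.2.toNat) * (ν p.1 * ν p.2) :=
    fun p => mul_nonneg (by positivity) (mul_nonneg (hν.1 _) (hν.1 _))
  -- summability of the fiber sums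
  have hTnat : Summable (fun j : ℕ => ∑' p : ℕ∞ × ℕ∞,
      if p.1 + p.2 = (j:ℕ∞) then
        (Real.sqrt p.1.toNat + Real.sqrt p.2.toNat) * (ν p.1 * ν p.2) else 0) := by
    apply summable_of_sum_range_le (c := ∑' p : ℕ∞ × ℕ∞,
        (Real.sqrt p.1.toNat + Real.sqrt p.2.toNat) * (ν p.1 * ν p.2))
    · intro j
      apply tsum_nonneg
      intro p
      split_ifs
      · exact hWnn p
      · exact le_refl 0
    · intro K
      rw [← Summable.tsum_finsetSum (fun j _ => summable_ite_W hc hν hνtop hνle j)]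
      apply Summable.tsum_le_tsum ?_ (summable_sum (fun j _ => summable_ite_W hc hν hνtop hνle j)) hW
      intro p
      by_cases hp : ∃ n : ℕ, p.1 + p.2 = (n:ℕ∞)
      · obtain ⟨n, hn⟩ := hp
        have heq : ∀ j ∈ Finset.range K,
            (if p.1 + p.2 = (j:ℕ∞) then
              (Real.sqrt p.1.toNat + Real.sqrt p.2.toNat) * (ν p.1 * ν p.2) else 0)
            = if j = n then
              (Real.sqrt p.1.toNat + Real.sqrt p.2.toNat) * (ν p.1 * ν p.2) else 0 := by
          intro j _
          apply if_congr _ rfl rfl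
          rw [hn]
          exact_mod_cast eq_comm
        rw [Finset.sum_congr rfl heq, Finset.sum_ite_eq' (Finset.range K) n]
        split_ifs
        · exact le_refl _
        · exact hWnn p
      · have heq : ∀ j ∈ Finset.range K,
            (if p.1 + p.2 = (j:ℕ∞) then
              (Real.sqrt p.1.toNat + Real.sqrt p.2.toNat) * (ν p.1 * ν p.2) else 0) = 0 := by
          intro j _
          rw [if_neg (fun hcon => hp ⟨j, hcon⟩)]
        rw [Finset.sum_congr rfl heq, Finset.sum_const, smul_zero]
        exact hWnn p
  apply Summable.of_nonneg_of_le
    (fun j => mul_nonneg (Real.sqrt_nonneg _) (conv_nonneg_apply hν hν _)) ?_ hTnat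
  intro j
  have hconv : Real.sqrt j * conv ν ν (j : ℕ∞)
      = ∑' p : ℕ∞ × ℕ∞,
          (if p.1 + p.2 = (j:ℕ∞) then Real.sqrt j * (ν p.1 * ν p.2) else 0) := by
    unfold conv
    rw [← tsum_mul_left]
    apply tsum_congr
    intro p
    rw [mul_ite, mul_zero]
  rw [hconv]
  have hsum1 : Summable (fun p : ℕ∞ × ℕ∞ =>
      if p.1 + p.2 = (j:ℕ∞) then Real.sqrt j * (ν p.1 * ν p.2) else 0) := by
    apply Summable.of_nonneg_of_le (f := fun p : ℕ∞ × ℕ∞ =>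
        Real.sqrt j * (ν p.1 * ν p.2)) ?_ ?_ ((summable_mulpair hν hν).mul_left _)
    · intro p
      split_ifs
      · exact mul_nonneg (Real.sqrt_nonneg _) (mul_nonneg (hν.1 _) (hν.1 _))
      · exact le_refl 0
    · intro p
      split_ifs
      · exact le_refl _
      · exact mul_nonneg (Real.sqrt_nonneg _) (mul_nonneg (hν.1 _) (hν.1 _))
  apply Summable.tsum_le_tsum ?_ hsum1 (summable_ite_W hc hν hνtop hνle j)
  intro p
  split_ifs with h
  · have hne1 : p.1 ≠ ⊤ := by
      intro ht
      rw [ht, top_add] at h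
      exact (by simp : (⊤:ℕ∞) ≠ (j:ℕ∞)) h
    have hne2 : p.2 ≠ ⊤ := by
      intro ht
      rw [ht, add_top] at h
      exact (by simp : (⊤:ℕ∞) ≠ (j:ℕ∞)) h
    have hj : j = p.1.toNat + p.2.toNat := by
      have hcast : ((p.1.toNat + p.2.toNat : ℕ) : ℕ∞) = (j:ℕ∞) := by
        rw [Nat.cast_add, ENat.coe_toNat hne1, ENat.coe_toNat hne2, h]
      exact_mod_cast hcast.symm
    have hsq : Real.sqrt j ≤ Real.sqrt p.1.toNat + Real.sqrt p.2.toNat := by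
      rw [hj]
      push_cast
      exact sqrt_add_le' (by positivity) (by positivity)
    exact mul_le_mul_of_nonneg_right hsq (mul_nonneg (hν.1 _) (hν.1 _))
  · exact le_refl 0

include hν hνtop hνle in
lemma summable_mean : Summable (fun n : ℕ => (n : ℝ) * Fc c ν (n : ℕ∞)) := by
  have hm₂nn : ∀ k, 0 ≤ conv ν ν k := conv_nonneg_apply hν hν
  have hm₂top : conv ν ν ⊤ = 0 := conv_top hνtop hνtop
  have hm₂nat : Summable (fun j : ℕ => conv ν ν (j:ℕ∞)) :=
    (hasSum_conv hν hν).summable.comp_injective Nat.cast_injective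
  have hS2 := summable_sqrt_conv hc hν hνtop hνle
  have hHnat : Summable (fun j : ℕ =>
      conv ν ν (j:ℕ∞) * (1 + 2*Real.sqrt (2*c) * Real.sqrt (((j:ℕ∞)).toNat))) := by
    apply (hm₂nat.add (hS2.mul_left (2*Real.sqrt (2*c)))).congr
    intro j
    rw [ENat.toNat_coe]
    ring
  have hH : Summable (fun j : ℕ∞ =>
      conv ν ν j * (1 + 2*Real.sqrt (2*c) * Real.sqrt (j.toNat))) :=
    (summable_enat_iff (by rw [hm₂top, zero_mul])).mp hHnat
  have hbound : ∀ K : ℕ, ∑ k ∈ Finset.range K, (k:ℝ) * FcFin c ν k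
      ≤ ∑' j : ℕ∞, conv ν ν j * (1 + 2*Real.sqrt (2*c) * Real.sqrt (j.toNat)) := by
    intro K
    have hsummand : ∀ k : ℕ, Summable (fun j : ℕ∞ =>
        if (k:ℕ∞) ≤ j then (k:ℝ) * (conv ν ν j * pK c j k) else 0) := by
      intro k
      apply ((summable_FcFin_summand hc hν k).mul_left (k:ℝ)).congr
      intro j
      rw [mul_ite, mul_zero]
    have hstep1 : ∀ k ∈ Finset.range K, (k:ℝ) * FcFin c ν k
        = ∑' j : ℕ∞, (if (k:ℕ∞) ≤ j then (k:ℝ) * (conv ν ν j * pK c j k) else 0) := by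
      intro k _
      unfold FcFin
      rw [← tsum_mul_left]
      apply tsum_congr
      intro j
      rw [mul_ite, mul_zero]
    rw [Finset.sum_congr rfl hstep1, ← Summable.tsum_finsetSum (fun k _ => hsummand k)]
    apply Summable.tsum_le_tsum ?_ (summable_sum (fun k _ => hsummand k)) hH
    intro j
    induction j using ENat.recTopCoe with
    | top =>
      have h0 : ∀ k ∈ Finset.range K,
          (if (k:ℕ∞) ≤ (⊤:ℕ∞) then (k:ℝ) * (conv ν ν ⊤ * pK c ⊤ k) else 0) = 0 := by
        intro k _
        rw [if_pos le_top, hm₂top, zero_mul, mul_zero]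
      rw [Finset.sum_eq_zero h0, hm₂top, zero_mul]
    | coe j =>
      have hfil : ∀ k : ℕ, ((k:ℕ∞) ≤ (j:ℕ∞)) ↔ k ≤ j := by
        intro k
        exact Nat.cast_le
      calc ∑ k ∈ Finset.range K,
            (if (k:ℕ∞) ≤ (j:ℕ∞) then (k:ℝ) * (conv ν ν (j:ℕ∞) * pK c (j:ℕ∞) k) else 0)
          = ∑ k ∈ Finset.filter (fun k : ℕ => (k:ℕ∞) ≤ (j:ℕ∞)) (Finset.range K),
              (k:ℝ) * (conv ν ν (j:ℕ∞) * pK c (j:ℕ∞) k) := (Finset.sum_filter _ _).symm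
        _ ≤ ∑ k ∈ insert 0 (Finset.Icc 1 j),
              (k:ℝ) * (conv ν ν (j:ℕ∞) * pK c (j:ℕ∞) k) := by
            apply Finset.sum_le_sum_of_subset_of_nonneg
            · intro k hk
              simp only [Finset.mem_filter, Finset.mem_range] at hk
              have hkj : k ≤ j := (hfil k).mp hk.2
              simp only [Finset.mem_insert, Finset.mem_Icc]
              omega
            · intro i _ _
              exact mul_nonneg (Nat.cast_nonneg i)
                (mul_nonneg (hm₂nn _) (pK_nonneg hc _ _))
        _ = ∑ k ∈ Finset.Icc 1 j, (k:ℝ) * (conv ν ν (j:ℕ∞) * pK c (j:ℕ∞) k) := by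
            rw [Finset.sum_insert (by simp), Nat.cast_zero, zero_mul, zero_add]
        _ = conv ν ν (j:ℕ∞) * ∑ k ∈ Finset.Icc 1 j, (k:ℝ) * pK c (j:ℕ∞) k := by
            rw [Finset.mul_sum]
            apply Finset.sum_congr rfl
            intro k _
            ring
        _ ≤ conv ν ν (j:ℕ∞) * (1 + 2*Real.sqrt (2*c) * Real.sqrt j) :=
            mul_le_mul_of_nonneg_left (mean_bound hc j) (hm₂nn _)
        _ = conv ν ν (j:ℕ∞) * (1 + 2*Real.sqrt (2*c) * Real.sqrt (((j:ℕ∞)).toNat)) := by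
            rw [ENat.toNat_coe]
  have hsumFcFin : Summable (fun k : ℕ => (k:ℝ) * FcFin c ν k) :=
    summable_of_sum_range_le
      (fun n => mul_nonneg (Nat.cast_nonneg n) (FcFin_nonneg hc hν n)) hbound
  apply hsumFcFin.congr
  intro n
  rw [Fc_coe hc hν]

end Mean

end KMaux

end

open KMaux

/-- For every `c > 0`, `F_c²(δ_∞)` is supported on `ℕ⁺` with finite mean;
consequently `F_c²(μ) ∈ S₁` for every `μ ∈ S`. -/
theorem Fc_sq_mem_S1 (c : ℝ) (hc : 0 < c) :
    MemS1 (Fc c (Fc c (delta ⊤))) ∧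
      ∀ μ : ℕ∞ → ℝ, IsDist μ → MemS1 (Fc c (Fc c μ)) := by
  have main : ∀ μ : ℕ∞ → ℝ, IsDist μ → MemS1 (Fc c (Fc c μ)) := by
    intro μ hμ
    have h1 : IsDist (Fc c μ) := Fc_isDist hc hμ
    exact ⟨Fc_isDist hc h1, Fc_top hc h1,
      summable_mean hc h1 (Fc_top hc hμ) (Fc_le_gK hc hμ)⟩
  have hdelta : IsDist (delta ⊤) := by
    refine ⟨fun k => ?_, ?_, ?_⟩
    · unfold delta
      split_ifs
      · norm_num
      · exact le_refl 0
    · unfold delta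
      rw [if_neg (by simp)]
    · exact hasSum_ite_eq ⊤ 1
  exact ⟨main _ hdelta, main⟩
end

section
/- For every c > 0, if X₂ is a random variable with distribution F_c²(δ_∞), then P(X₂ ≥ i) ≤ 16c²/((i-1)(i-2)) for all integers i ≥ 4. -/
open Filter Topology Set

namespace FcAux
open Finset
variable {c : ℝ}

lemma lam_nonneg (l : ℕ) : 0 ≤ (l : ℝ) * ((l : ℝ) - 1) / 2 := by
  rcases Nat.eq_zero_or_pos l with h | h
  · simp [h]
  · have h1 : (1 : ℝ) ≤ (l : ℝ) := by exact_mod_cast h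
    nlinarith

lemma kf_nonneg (hc : 0 < c) (l : ℕ) : 0 ≤ kingmanFactor c l :=
  div_nonneg (lam_nonneg l) (by linarith [lam_nonneg l])

lemma kf_le_one (hc : 0 < c) (l : ℕ) : kingmanFactor c l ≤ 1 := by
  unfold kingmanFactor
  rw [div_le_one (by linarith [lam_nonneg l])]
  linarith

lemma one_sub_kf (hc : 0 < c) (l : ℕ) :
    1 - kingmanFactor c l = c / ((l : ℝ) * ((l : ℝ) - 1) / 2 + c) := by
  unfold kingmanFactor
  have h : (l : ℝ) * ((l : ℝ) - 1) / 2 + c ≠ 0 := by linarith [lam_nonneg l]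
  rw [eq_div_iff h, sub_mul, div_mul_cancel₀ _ h]
  ring

lemma one_sub_kf_nonneg (hc : 0 < c) (l : ℕ) : 0 ≤ 1 - kingmanFactor c l := by
  linarith [kf_le_one hc l]

lemma one_sub_kf_le (hc : 0 < c) (m l : ℕ) (hm : 1 ≤ m) :
    1 - kingmanFactor c (m + 1 + l) ≤ 2 * c / ((m : ℝ) + l) - 2 * c / ((m : ℝ) + l + 1) := by
  have hu : (1 : ℝ) ≤ (m : ℝ) + l := by
    have : (1 : ℝ) ≤ (m : ℝ) := by exact_mod_cast hm
    have : (0 : ℝ) ≤ (l : ℝ) := Nat.cast_nonneg l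
    linarith
  rw [one_sub_kf hc]
  have hlam : ((m + 1 + l : ℕ) : ℝ) * (((m + 1 + l : ℕ) : ℝ) - 1) / 2
      = (((m : ℝ) + l + 1) * ((m : ℝ) + l)) / 2 := by push_cast; ring
  rw [hlam]
  have hpos : (0 : ℝ) < (((m : ℝ) + l + 1) * ((m : ℝ) + l)) / 2 := by nlinarith
  have h1 : c / ((((m : ℝ) + l + 1) * ((m : ℝ) + l)) / 2 + c)
      ≤ c / ((((m : ℝ) + l + 1) * ((m : ℝ) + l)) / 2) :=
    div_le_div_of_nonneg_left hc.le hpos (by linarith)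
  have h2 : c / ((((m : ℝ) + l + 1) * ((m : ℝ) + l)) / 2)
      = 2 * c / ((m : ℝ) + l) - 2 * c / ((m : ℝ) + l + 1) := by
    field_simp
    ring
  linarith

lemma sum_one_sub_kf_le (hc : 0 < c) (m : ℕ) (hm : 1 ≤ m) (n : ℕ) :
    ∑ l ∈ range n, (1 - kingmanFactor c (m + 1 + l)) ≤ 2 * c / (m : ℝ) := by
  have key : ∑ l ∈ range n, (1 - kingmanFactor c (m + 1 + l))
      ≤ ∑ l ∈ range n, (2 * c / ((m : ℝ) + l) - 2 * c / ((m : ℝ) + l + 1)) :=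
    Finset.sum_le_sum fun l _ => one_sub_kf_le hc m l hm
  have tel : ∑ l ∈ range n, (2 * c / ((m : ℝ) + l) - 2 * c / ((m : ℝ) + l + 1))
      = 2 * c / (m : ℝ) - 2 * c / ((m : ℝ) + n) := by
    have := Finset.sum_range_sub' (fun l : ℕ => 2 * c / ((m : ℝ) + l)) n
    simp only [Nat.cast_zero, add_zero] at this
    rw [← this]
    apply Finset.sum_congr rfl
    intro l _
    push_cast
    ring_nf
  have hlast : 0 ≤ 2 * c / ((m : ℝ) + n) := by positivity
  linarith

lemma summable_one_sub_kf (hc : 0 < c) (m : ℕ) (hm : 1 ≤ m) :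
    Summable (fun l => 1 - kingmanFactor c (m + 1 + l)) :=
  summable_of_sum_range_le (fun l => one_sub_kf_nonneg hc _) (sum_one_sub_kf_le hc m hm)

lemma tsum_one_sub_kf_le (hc : 0 < c) (m : ℕ) (hm : 1 ≤ m) :
    ∑' l, (1 - kingmanFactor c (m + 1 + l)) ≤ 2 * c / (m : ℝ) :=
  Summable.tsum_le_of_sum_range_le (summable_one_sub_kf hc m hm) (sum_one_sub_kf_le hc m hm)


lemma kf_one (hc : 0 < c) : kingmanFactor c 1 = 0 := by
  norm_num [kingmanFactor]

lemma kf_zero (hc : 0 < c) : kingmanFactor c 0 = 0 := by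
  norm_num [kingmanFactor]


lemma hasProd_of_le_one (F : ℕ → ℝ) (h0 : ∀ l, 0 ≤ F l) (h1 : ∀ l, F l ≤ 1) :
    HasProd F (⨅ s : Finset ℕ, ∏ i ∈ s, F i) := by
  apply tendsto_atTop_ciInf
  · intro s t hst
    show ∏ b ∈ t, F b ≤ ∏ b ∈ s, F b
    rw [← Finset.prod_sdiff hst]
    exact mul_le_of_le_one_left (Finset.prod_nonneg fun i _ => h0 i)
      (Finset.prod_le_one (fun i _ => h0 i) (fun i _ => h1 i))
  · refine ⟨0, ?_⟩
    rintro x ⟨s, rfl⟩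
    exact Finset.prod_nonneg fun i _ => h0 i

noncomputable def Qprod (c : ℝ) (m : ℕ) : ℝ := ∏' l : ℕ, kingmanFactor c (m + 1 + l)

lemma multipliable_kf (hc : 0 < c) (m : ℕ) :
    Multipliable (fun l => kingmanFactor c (m + 1 + l)) :=
  ⟨_, hasProd_of_le_one _ (fun l => kf_nonneg hc _) (fun l => kf_le_one hc _)⟩

lemma Q_le_one (hc : 0 < c) (m : ℕ) : Qprod c m ≤ 1 :=
  Multipliable.tprod_le_of_prod_range_le (multipliable_kf hc m)
    (fun n => Finset.prod_le_one (fun i _ => kf_nonneg hc _) (fun i _ => kf_le_one hc _))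

lemma Q_nonneg (hc : 0 < c) (m : ℕ) : 0 ≤ Qprod c m :=
  ge_of_tendsto' ((multipliable_kf hc m).hasProd.tendsto_prod_nat)
    (fun n => Finset.prod_nonneg fun i _ => kf_nonneg hc _)

lemma one_sub_sum_le_prod (s : Finset ℕ) (x : ℕ → ℝ) (h0 : ∀ i ∈ s, 0 ≤ x i)
    (h1 : ∀ i ∈ s, x i ≤ 1) : 1 - ∑ i ∈ s, x i ≤ ∏ i ∈ s, (1 - x i) := by
  classical
  induction s using Finset.induction_on with
  | empty => simp
  | insert _ _ ha ih =>
    rename_i a s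
    rw [Finset.prod_insert ha, Finset.sum_insert ha]
    have ihs := ih (fun i hi => h0 i (Finset.mem_insert_of_mem hi))
      (fun i hi => h1 i (Finset.mem_insert_of_mem hi))
    have hxa0 := h0 a (Finset.mem_insert_self a s)
    have hxa1 := h1 a (Finset.mem_insert_self a s)
    have hsum : 0 ≤ ∑ i ∈ s, x i :=
      Finset.sum_nonneg fun i hi => h0 i (Finset.mem_insert_of_mem hi)
    nlinarith [ihs]

lemma Q_ge (hc : 0 < c) (m : ℕ) (hm : 1 ≤ m) : 1 - 2 * c / (m : ℝ) ≤ Qprod c m := by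
  apply ge_of_tendsto' ((multipliable_kf hc m).hasProd.tendsto_prod_nat)
  intro n
  have h1 : 1 - ∑ l ∈ range n, (1 - kingmanFactor c (m + 1 + l))
      ≤ ∏ l ∈ range n, (1 - (1 - kingmanFactor c (m + 1 + l))) :=
    one_sub_sum_le_prod _ _ (fun l _ => by linarith [kf_le_one hc (m + 1 + l)])
      (fun l _ => by linarith [kf_nonneg hc (m + 1 + l)])
  simp only [sub_sub_cancel] at h1
  have h2 := sum_one_sub_kf_le hc m hm n
  linarith

lemma Q_succ (hc : 0 < c) (m : ℕ) :
    Qprod c m = kingmanFactor c (m + 1) * Qprod c (m + 1) := by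
  have h1 := (multipliable_kf hc m).hasProd.tendsto_prod_nat
  have h2 := (multipliable_kf hc (m + 1)).hasProd.tendsto_prod_nat
  have h3 : Tendsto (fun n => ∏ l ∈ range (n + 1), kingmanFactor c (m + 1 + l)) atTop
      (𝓝 (Qprod c m)) := (tendsto_add_atTop_iff_nat 1).mpr h1
  have h4 : (fun n => ∏ l ∈ range (n + 1), kingmanFactor c (m + 1 + l))
      = fun n => kingmanFactor c (m + 1) * ∏ l ∈ range n, kingmanFactor c (m + 1 + 1 + l) := by
    funext n
    rw [Finset.prod_range_succ']
    rw [mul_comm]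
    congr 1
    apply Finset.prod_congr rfl
    intro l _
    congr 1
    omega
  rw [h4] at h3
  exact tendsto_nhds_unique h3 (h2.const_mul _)

lemma Q_zero (hc : 0 < c) : Qprod c 0 = 0 := by
  have h : HasProd (fun l => kingmanFactor c (0 + 1 + l)) 0 := by
    rw [HasProd]
    apply Tendsto.congr' _ tendsto_const_nhds
    filter_upwards [eventually_ge_atTop ({0} : Finset ℕ)] with s hs
    exact (Finset.prod_eq_zero (hs (Finset.mem_singleton_self 0)) (by simpa using kf_one hc)).symm
  exact h.tprod_eq.symm ▸ rfl


lemma cdiv_nonneg (hc : 0 < c) (n : ℕ) : 0 ≤ c / ((n : ℝ) * ((n : ℝ) - 1) / 2 + c) :=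
  div_nonneg hc.le (by linarith [lam_nonneg n])

lemma cdiv_le_one (hc : 0 < c) (n : ℕ) : c / ((n : ℝ) * ((n : ℝ) - 1) / 2 + c) ≤ 1 := by
  rw [div_le_one (by linarith [lam_nonneg n])]
  linarith [lam_nonneg n]

lemma pk_top (n : ℕ) : pK c ⊤ n = (c / ((n : ℝ) * ((n : ℝ) - 1) / 2 + c)) * Qprod c n := by
  simp only [pK, if_pos rfl]
  rfl

lemma pk_top_zero (hc : 0 < c) : pK c ⊤ 0 = 0 := by
  rw [pk_top, Q_zero hc, mul_zero]

lemma sum_pk_top (hc : 0 < c) (m : ℕ) : ∑ n ∈ range (m + 1), pK c ⊤ n = Qprod c m := by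
  induction m with
  | zero => simpa using (pk_top_zero hc).trans (Q_zero hc).symm
  | succ m ih =>
    rw [Finset.sum_range_succ, ih, pk_top, ← one_sub_kf hc, Q_succ hc m]
    ring

lemma pk_top_nonneg (hc : 0 < c) (n : ℕ) : 0 ≤ pK c ⊤ n := by
  rw [pk_top]
  exact mul_nonneg (cdiv_nonneg hc n) (Q_nonneg hc n)

lemma hasSum_pk_top (hc : 0 < c) : HasSum (fun n => pK c ⊤ n) 1 := by
  rw [hasSum_iff_tendsto_nat_of_nonneg (fun n => pk_top_nonneg hc n)]
  rw [← tendsto_add_atTop_iff_nat 1]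
  have heq : (fun m => ∑ n ∈ range (m + 1), pK c ⊤ n) = fun m => Qprod c m := by
    funext m; exact sum_pk_top hc m
  rw [heq]
  have hlow : Tendsto (fun m : ℕ => 1 - 2 * c / (m : ℝ)) atTop (𝓝 1) := by
    have := (tendsto_const_div_atTop_nhds_zero_nat (2 * c))
    have h2 := tendsto_const_nhds (x := (1 : ℝ)) (f := atTop (α := ℕ)) |>.sub this
    simpa using h2
  apply tendsto_of_tendsto_of_tendsto_of_le_of_le' hlow tendsto_const_nhds
  · filter_upwards [eventually_ge_atTop 1] with m hm
    exact Q_ge hc m hm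
  · filter_upwards with m
    exact Q_le_one hc m

lemma hasSum_pk_tail (hc : 0 < c) (m : ℕ) :
    HasSum (fun n => if m + 1 ≤ n then pK c ⊤ n else 0) (1 - Qprod c m) := by
  have h1 : HasSum (fun n => if n < m + 1 then pK c ⊤ n else 0)
      (∑ n ∈ range (m + 1), (if n < m + 1 then pK c ⊤ n else 0)) := by
    apply hasSum_sum_of_ne_finset_zero
    intro n hn
    rw [if_neg (by simpa using hn)]
  have h2 : ∑ n ∈ range (m + 1), (if n < m + 1 then pK c ⊤ n else 0)
      = ∑ n ∈ range (m + 1), pK c ⊤ n := by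
    apply Finset.sum_congr rfl
    intro n hn
    rw [if_pos (Finset.mem_range.mp hn)]
  rw [h2, sum_pk_top hc m] at h1
  have h3 := (hasSum_pk_top hc).sub h1
  refine (congrArg (fun g : ℕ → ℝ => HasSum g (1 - Qprod c m)) ?_).mpr h3
  funext n
  rcases lt_or_ge n (m + 1) with h | h
  · rw [if_neg (by omega), if_pos h, sub_self]
  · rw [if_pos h, if_neg (by omega), sub_zero]

lemma tsum_pk_tail_le (hc : 0 < c) (m : ℕ) (hm : 1 ≤ m) :
    ∑' n, (if m + 1 ≤ n then pK c ⊤ n else 0) ≤ 2 * c / (m : ℝ) := by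
  rw [(hasSum_pk_tail hc m).tsum_eq]
  linarith [Q_ge hc m hm]

noncomputable def Rprod (c : ℝ) (j m : ℕ) : ℝ := ∏ l ∈ Finset.Icc (m + 1) j, kingmanFactor c l

lemma pk_coe (j n : ℕ) :
    pK c (j : ℕ∞) n = (c / ((n : ℝ) * ((n : ℝ) - 1) / 2 + c)) * Rprod c j n := by
  simp [pK, Rprod]

lemma R_nonneg (hc : 0 < c) (j m : ℕ) : 0 ≤ Rprod c j m :=
  Finset.prod_nonneg fun l _ => kf_nonneg hc l

lemma R_le_one (hc : 0 < c) (j m : ℕ) : Rprod c j m ≤ 1 :=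
  Finset.prod_le_one (fun l _ => kf_nonneg hc l) (fun l _ => kf_le_one hc l)

lemma pk_coe_nonneg (hc : 0 < c) (j n : ℕ) : 0 ≤ pK c (j : ℕ∞) n := by
  rw [pk_coe]
  exact mul_nonneg (cdiv_nonneg hc n) (R_nonneg hc j n)

lemma pk_coe_le_one (hc : 0 < c) (j n : ℕ) : pK c (j : ℕ∞) n ≤ 1 := by
  rw [pk_coe]
  exact mul_le_one₀ (cdiv_le_one hc n) (R_nonneg hc j n) (R_le_one hc j n)

lemma R_bot (hc : 0 < c) {j m : ℕ} (hm : m + 1 ≤ j) :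
    Rprod c j m = kingmanFactor c (m + 1) * Rprod c j (m + 1) := by
  unfold Rprod
  rw [← Finset.Ico_add_one_right_eq_Icc, ← Finset.Ico_add_one_right_eq_Icc,
    Finset.prod_eq_prod_Ico_succ_bot (by omega : m + 1 < j + 1)]

lemma R_diag (j : ℕ) : Rprod c j j = 1 := by
  unfold Rprod
  rw [Finset.Icc_eq_empty (by omega), Finset.prod_empty]

lemma R_ge (hc : 0 < c) (j m : ℕ) (hm : 1 ≤ m) : 1 - 2 * c / (m : ℝ) ≤ Rprod c j m := by
  have h1 : 1 - ∑ l ∈ Finset.Icc (m + 1) j, (1 - kingmanFactor c l)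
      ≤ ∏ l ∈ Finset.Icc (m + 1) j, (1 - (1 - kingmanFactor c l)) :=
    one_sub_sum_le_prod _ _ (fun l _ => by linarith [kf_le_one hc l])
      (fun l _ => by linarith [kf_nonneg hc l])
  simp only [sub_sub_cancel] at h1
  have h2 : ∑ l ∈ Finset.Icc (m + 1) j, (1 - kingmanFactor c l)
      = ∑ l ∈ range (j + 1 - (m + 1)), (1 - kingmanFactor c (m + 1 + l)) := by
    rw [← Finset.Ico_add_one_right_eq_Icc, Finset.sum_Ico_eq_sum_range]
  have h3 := sum_one_sub_kf_le hc m hm (j + 1 - (m + 1))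
  rw [h2] at h1
  unfold Rprod
  linarith

lemma sum_pk_coe (hc : 0 < c) (j : ℕ) : ∀ m, m ≤ j →
    ∑ n ∈ range (m + 1), pK c (j : ℕ∞) n = Rprod c j m := by
  intro m
  induction m with
  | zero =>
    intro _
    rw [Finset.sum_range_one, pk_coe]
    norm_num
    rw [div_self hc.ne', one_mul]
  | succ m ih =>
    intro hm
    rw [Finset.sum_range_succ, ih (by omega), pk_coe, ← one_sub_kf hc,
      R_bot hc (by omega : m + 1 ≤ j)]
    ring

noncomputable def sfun (c : ℝ) (i j : ℕ) : ℝ :=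
  ∑ n ∈ range i, (if n ≤ j then pK c (j : ℕ∞) n else 0)

lemma s_nonneg (hc : 0 < c) (i j : ℕ) : 0 ≤ sfun c i j :=
  Finset.sum_nonneg fun n _ => by
    split
    · exact pk_coe_nonneg hc j n
    · exact le_refl 0

lemma s_eq_one (hc : 0 < c) {i j : ℕ} (hj : j < i) : sfun c i j = 1 := by
  unfold sfun
  rw [← Finset.sum_filter]
  have hfil : (range i).filter (fun n => n ≤ j) = range (j + 1) := by
    ext a
    simp only [Finset.mem_filter, Finset.mem_range]
    omega
  rw [hfil, sum_pk_coe hc j j le_rfl, R_diag]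

lemma s_eq_R (hc : 0 < c) {i j : ℕ} (hi : 1 ≤ i) (hj : i ≤ j) :
    sfun c i j = Rprod c j (i - 1) := by
  unfold sfun
  have h1 : ∑ n ∈ range i, (if n ≤ j then pK c (j : ℕ∞) n else 0)
      = ∑ n ∈ range i, pK c (j : ℕ∞) n := by
    apply Finset.sum_congr rfl
    intro n hn
    rw [if_pos (by have := Finset.mem_range.mp hn; omega)]
  rw [h1]
  rw [show range i = range ((i - 1) + 1) by rw [Nat.sub_add_cancel hi],
    sum_pk_coe hc j (i - 1) (by omega)]

lemma s_le_one (hc : 0 < c) (i j : ℕ) : sfun c i j ≤ 1 := by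
  rcases lt_or_ge j i with h | h
  · exact (s_eq_one hc h).le
  · rcases Nat.eq_zero_or_pos i with h0 | h0
    · subst h0; simp [sfun]
    · rw [s_eq_R hc h0 h]
      exact R_le_one hc j _

lemma s_ge (hc : 0 < c) {i j : ℕ} (hi : 2 ≤ i) (hj : i ≤ j) :
    1 - 2 * c / ((i : ℝ) - 1) ≤ sfun c i j := by
  rw [s_eq_R hc (by omega) hj]
  have h1 := R_ge hc j (i - 1) (by omega)
  have h2 : ((i - 1 : ℕ) : ℝ) = (i : ℝ) - 1 := by
    push_cast [Nat.cast_sub (by omega : 1 ≤ i)]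
    ring
  rw [h2] at h1
  exact h1

lemma hasSum_enat (f : ℕ∞ → ℝ) {a : ℝ} (h : HasSum (fun n : ℕ => f n) a) :
    HasSum f (a + f ⊤) := by
  have h1 : HasSum (fun k : ℕ∞ => if k = ⊤ then 0 else f k) a := by
    rw [← Function.Injective.hasSum_iff (Nat.cast_injective : Function.Injective
      (fun n : ℕ => (n : ℕ∞)))]
    · refine HasSum.congr_fun h ?_
      intro n
      simp
    · intro k hk
      rw [if_pos]
      by_contra hkt
      obtain ⟨n, hn⟩ := Option.ne_none_iff_exists.mp hkt
      exact hk ⟨n, hn⟩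
  have h2 : HasSum (fun k : ℕ∞ => if k = ⊤ then f ⊤ else 0) (f ⊤) := hasSum_ite_eq ⊤ (f ⊤)
  have h3 := h1.add h2
  refine h3.congr_fun ?_
  intro k
  by_cases hk : k = ⊤ <;> simp [hk]

lemma conv_delta (k : ℕ∞) :
    conv (delta ⊤) (delta ⊤) k = (if ⊤ = k then 1 else 0) := by
  unfold conv
  rw [tsum_eq_single ((⊤ : ℕ∞), (⊤ : ℕ∞))]
  · simp [delta]
  · rintro ⟨a, b⟩ hab
    have : a ≠ ⊤ ∨ b ≠ ⊤ := by
      by_contra hcon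
      push_neg at hcon
      exact hab (by rw [hcon.1, hcon.2])
    rcases this with ha | hb
    · simp [delta, ha]
    · simp [delta, hb]

lemma FcFin_delta (hc : 0 < c) (n : ℕ) : FcFin c (delta ⊤) n = pK c ⊤ n := by
  unfold FcFin
  rw [tsum_eq_single (⊤ : ℕ∞)]
  · rw [if_pos le_top, conv_delta]
    simp
  · intro j hj
    have hz : conv (delta ⊤) (delta ⊤) j = 0 := by
      rw [conv_delta, if_neg (fun h => hj h.symm)]
    rw [hz]
    split <;> simp

lemma Fc_delta_top (hc : 0 < c) : Fc c (delta ⊤) ⊤ = 0 := by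
  show (1 : ℝ) - ∑' n : ℕ, FcFin c (delta ⊤) n = 0
  rw [tsum_congr (FcFin_delta hc), (hasSum_pk_top hc).tsum_eq, sub_self]

lemma Fc_delta_coe (hc : 0 < c) (n : ℕ) : Fc c (delta ⊤) (n : ℕ∞) = pK c ⊤ n := by
  rcases Nat.eq_zero_or_pos n with h0 | h0
  · subst h0
    rw [pk_top_zero hc]
    show Fc c (delta ⊤) ((0 : ℕ) : ℕ∞) = 0
    unfold Fc
    rw [if_neg (by simp), if_pos (by norm_num)]
  · unfold Fc
    rw [if_neg (by simp), if_neg (by exact_mod_cast Nat.pos_iff_ne_zero.mp h0)]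
    simpa using FcFin_delta hc n

lemma Fc_coe (μ : ℕ∞ → ℝ) {n : ℕ} (hn : n ≠ 0) : Fc c μ (n : ℕ∞) = FcFin c μ n := by
  unfold Fc
  rw [if_neg (by simp), if_neg (by exact_mod_cast hn)]
  simp

lemma summable_antidiag (F : ℕ × ℕ → ℝ) (hF : Summable F) :
    Summable (fun j : ℕ => ∑ p ∈ Finset.HasAntidiagonal.antidiagonal j, F p) := by
  have h1 : Summable (F ∘ Finset.HasAntidiagonal.sigmaAntidiagonalEquivProd) :=
    (Equiv.summable_iff _).mpr hF
  have h2 := h1.sigma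
  refine h2.congr ?_
  intro j
  rw [← Finset.tsum_subtype]
  rfl

lemma tsum_antidiag (F : ℕ × ℕ → ℝ) (hF : Summable F) :
    ∑' j : ℕ, (∑ p ∈ Finset.HasAntidiagonal.antidiagonal j, F p) = ∑' p : ℕ × ℕ, F p := by
  have h1 : Summable (F ∘ Finset.HasAntidiagonal.sigmaAntidiagonalEquivProd) :=
    (Equiv.summable_iff _).mpr hF
  have h2 := Summable.tsum_sigma h1
  have h3 := Equiv.tsum_eq Finset.HasAntidiagonal.sigmaAntidiagonalEquivProd F
  rw [← h3, show (fun c => F (Finset.HasAntidiagonal.sigmaAntidiagonalEquivProd c)) = F ∘ ⇑Finset.HasAntidiagonal.sigmaAntidiagonalEquivProd from rfl, h2]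
  apply tsum_congr
  intro j
  rw [← Finset.tsum_subtype]
  rfl

lemma summable_pk_top (hc : 0 < c) : Summable (fun n => pK c ⊤ n) := (hasSum_pk_top hc).summable

noncomputable def Apair (c : ℝ) (j : ℕ) : ℝ :=
  ∑ p ∈ Finset.HasAntidiagonal.antidiagonal j, pK c ⊤ p.1 * pK c ⊤ p.2

lemma Apair_nonneg (hc : 0 < c) (j : ℕ) : 0 ≤ Apair c j :=
  Finset.sum_nonneg fun p _ => mul_nonneg (pk_top_nonneg hc _) (pk_top_nonneg hc _)

lemma conv_nu_top (hc : 0 < c) : conv (Fc c (delta ⊤)) (Fc c (delta ⊤)) ⊤ = 0 := by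
  unfold conv
  have hzero : ∀ p : ℕ∞ × ℕ∞,
      (if p.1 + p.2 = ⊤ then Fc c (delta ⊤) p.1 * Fc c (delta ⊤) p.2 else 0) = 0 := by
    rintro ⟨a, b⟩
    split
    case isTrue h =>
      rcases WithTop.add_eq_top.mp h with ha | hb
      · rw [show a = ⊤ from ha, Fc_delta_top hc, zero_mul]
      · rw [show b = ⊤ from hb, Fc_delta_top hc, mul_zero]
    case isFalse h => rfl
  rw [tsum_congr hzero, tsum_zero]

def pairCast : ℕ × ℕ ↪ ℕ∞ × ℕ∞ :=
  ⟨fun p => ((p.1 : ℕ∞), (p.2 : ℕ∞)), by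
    rintro ⟨a, b⟩ ⟨a', b'⟩ h
    simp only [Prod.mk.injEq, Nat.cast_inj] at h
    exact Prod.ext h.1 h.2⟩

lemma conv_nu_coe (hc : 0 < c) (j : ℕ) :
    conv (Fc c (delta ⊤)) (Fc c (delta ⊤)) (j : ℕ∞) = Apair c j := by
  unfold conv
  rw [tsum_eq_sum (s := (Finset.HasAntidiagonal.antidiagonal j).map pairCast)]
  · rw [Finset.sum_map]
    apply Finset.sum_congr rfl
    rintro ⟨a, b⟩ hab
    have h1 : a + b = j := Finset.HasAntidiagonal.mem_antidiagonal.mp hab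
    change (if ((a : ℕ∞) + (b : ℕ∞) = (j : ℕ∞)) then Fc c (delta ⊤) a * Fc c (delta ⊤) b else 0) = _
    rw [if_pos (by exact_mod_cast congrArg (Nat.cast : ℕ → ℕ∞) h1),
      Fc_delta_coe hc, Fc_delta_coe hc]
  · rintro ⟨a, b⟩ hab
    split
    case isFalse => rfl
    case isTrue h =>
      exfalso
      have ha : a ≠ ⊤ := by
        rintro rfl
        rw [top_add] at h
        exact (by simp : ((⊤ : ℕ∞) ≠ (j : ℕ∞))) h
      have hb : b ≠ ⊤ := by
        rintro rfl
        rw [add_top] at h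
        exact (by simp : ((⊤ : ℕ∞) ≠ (j : ℕ∞))) h
      obtain ⟨a', ha'⟩ := Option.ne_none_iff_exists.mp ha
      obtain ⟨b', hb'⟩ := Option.ne_none_iff_exists.mp hb
      subst ha' hb'
      have hab' : a' + b' = j := by
        have h2 : (a' : ℕ∞) + (b' : ℕ∞) = (j : ℕ∞) := h
        exact_mod_cast h2
      have hmem : (a', b') ∈ Finset.HasAntidiagonal.antidiagonal j := Finset.HasAntidiagonal.mem_antidiagonal.mpr hab'
      exact hab (Finset.mem_map_of_mem pairCast hmem)

lemma summable_P (hc : 0 < c) : Summable (fun p : ℕ × ℕ => pK c ⊤ p.1 * pK c ⊤ p.2) :=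
  (summable_pk_top hc).mul_of_nonneg (summable_pk_top hc)
    (fun n => pk_top_nonneg hc n) (fun n => pk_top_nonneg hc n)

lemma hasSum_P (hc : 0 < c) : HasSum (fun p : ℕ × ℕ => pK c ⊤ p.1 * pK c ⊤ p.2) 1 := by
  have hs := (summable_P hc).hasSum
  have heq := HasSum.mul_eq (hasSum_pk_top hc) (hasSum_pk_top hc) hs
  rw [← heq] at hs
  rwa [one_mul] at hs

lemma summable_Apair (hc : 0 < c) : Summable (Apair c) :=
  summable_antidiag _ (summable_P hc)

lemma tsum_Apair (hc : 0 < c) : ∑' j : ℕ, Apair c j = 1 :=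
  (tsum_antidiag _ (summable_P hc)).trans (hasSum_P hc).tsum_eq

lemma FcFin_nu (hc : 0 < c) (n : ℕ) : FcFin c (Fc c (delta ⊤)) n
    = ∑' j : ℕ, (if n ≤ j then Apair c j * pK c (j : ℕ∞) n else 0) := by
  unfold FcFin
  have hsupp : Function.support (fun j : ℕ∞ => if (n : ℕ∞) ≤ j then
        conv (Fc c (delta ⊤)) (Fc c (delta ⊤)) j * pK c j n else 0)
      ⊆ Set.range (fun m : ℕ => (m : ℕ∞)) := by
    intro k hk
    by_contra hkr
    apply hk
    have hkt : k = ⊤ := by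
      by_contra hkt
      obtain ⟨m, hm⟩ := Option.ne_none_iff_exists.mp hkt
      exact hkr ⟨m, hm⟩
    subst hkt
    show (if (n : ℕ∞) ≤ ⊤ then conv (Fc c (delta ⊤)) (Fc c (delta ⊤)) ⊤ * pK c ⊤ n else 0) = 0
    rw [if_pos le_top, conv_nu_top hc, zero_mul]
  rw [← Function.Injective.tsum_eq
    (Nat.cast_injective : Function.Injective (fun m : ℕ => (m : ℕ∞))) hsupp]
  apply tsum_congr
  intro j
  show (if (n : ℕ∞) ≤ (j : ℕ∞) then conv (Fc c (delta ⊤)) (Fc c (delta ⊤)) (j : ℕ∞)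
      * pK c (j : ℕ∞) n else 0) = _
  rw [conv_nu_coe hc j]
  by_cases h : n ≤ j
  · rw [if_pos (by exact_mod_cast h), if_pos h]
  · rw [if_neg (by exact_mod_cast h), if_neg h]

lemma summable_FcFin_term (hc : 0 < c) (n : ℕ) :
    Summable (fun j : ℕ => if n ≤ j then Apair c j * pK c (j : ℕ∞) n else 0) := by
  apply Summable.of_nonneg_of_le _ _ (summable_Apair hc)
  · intro j
    split
    · exact mul_nonneg (Apair_nonneg hc j) (pk_coe_nonneg hc j n)
    · exact le_rfl
  · intro j
    split
    · exact mul_le_of_le_one_right (Apair_nonneg hc j) (pk_coe_le_one hc j n)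
    · exact Apair_nonneg hc j

lemma sum_FcFin (hc : 0 < c) (N : ℕ) :
    ∑ n ∈ range N, FcFin c (Fc c (delta ⊤)) n = ∑' j : ℕ, Apair c j * sfun c N j := by
  rw [Finset.sum_congr rfl (fun n _ => FcFin_nu hc n),
    ← Summable.tsum_finsetSum (fun n _ => summable_FcFin_term hc n)]
  apply tsum_congr
  intro j
  unfold sfun
  rw [Finset.mul_sum]
  apply Finset.sum_congr rfl
  intro n _
  split <;> simp

lemma summable_As (hc : 0 < c) (N : ℕ) : Summable (fun j : ℕ => Apair c j * sfun c N j) :=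
  Summable.of_nonneg_of_le
    (fun j => mul_nonneg (Apair_nonneg hc j) (s_nonneg hc N j))
    (fun j => mul_le_of_le_one_right (Apair_nonneg hc j) (s_le_one hc N j))
    (summable_Apair hc)

lemma summable_FcFin_nu (hc : 0 < c) : Summable (fun n : ℕ => FcFin c (Fc c (delta ⊤)) n) := by
  apply summable_of_sum_range_le (c := 1)
  · intro n
    rw [FcFin_nu hc n]
    apply tsum_nonneg
    intro j
    split
    · exact mul_nonneg (Apair_nonneg hc j) (pk_coe_nonneg hc j n)
    · exact le_rfl
  · intro N
    rw [sum_FcFin hc N]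
    calc ∑' j : ℕ, Apair c j * sfun c N j ≤ ∑' j : ℕ, Apair c j :=
          Summable.tsum_le_tsum (fun j => mul_le_of_le_one_right (Apair_nonneg hc j) (s_le_one hc N j))
            (summable_As hc N) (summable_Apair hc)
      _ = 1 := tsum_Apair hc

set_option maxHeartbeats 1000000 in
lemma tsum_Apair_tail_le (hc : 0 < c) {i m : ℕ} (hm : 2 ≤ m)
    (him : ∀ a b : ℕ, i ≤ a + b → m ≤ a ∨ m ≤ b) :
    ∑' j : ℕ, (if i ≤ j then Apair c j else 0) ≤ 2 * (2 * c / ((m : ℝ) - 1)) := by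
  have hg1nonneg : ∀ a : ℕ, 0 ≤ (if m ≤ a then pK c ⊤ a else 0) := fun a => by
    split
    · exact pk_top_nonneg hc a
    · exact le_rfl
  have hg1le : ∀ a : ℕ, (if m ≤ a then pK c ⊤ a else 0) ≤ pK c ⊤ a := fun a => by
    split
    · exact le_rfl
    · exact pk_top_nonneg hc a
  have hg1sum : Summable (fun a : ℕ => if m ≤ a then pK c ⊤ a else 0) :=
    Summable.of_nonneg_of_le hg1nonneg hg1le (summable_pk_top hc)
  have hTle : (∑' a : ℕ, if m ≤ a then pK c ⊤ a else 0) ≤ 2 * c / ((m : ℝ) - 1) := by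
    have h1 := tsum_pk_tail_le hc (m - 1) (by omega)
    rw [show m - 1 + 1 = m from by omega] at h1
    have h2 : ((m - 1 : ℕ) : ℝ) = (m : ℝ) - 1 := by
      push_cast [Nat.cast_sub (by omega : 1 ≤ m)]
      ring
    rw [h2] at h1
    exact h1
  have hg1has : HasSum (fun a : ℕ => if m ≤ a then pK c ⊤ a else 0)
      (∑' a : ℕ, if m ≤ a then pK c ⊤ a else 0) := hg1sum.hasSum
  have hs1 : Summable (fun p : ℕ × ℕ => (if m ≤ p.1 then pK c ⊤ p.1 else 0) * pK c ⊤ p.2) :=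
    hg1sum.mul_of_nonneg (summable_pk_top hc) hg1nonneg (fun n => pk_top_nonneg hc n)
  have hs1' : HasSum (fun p : ℕ × ℕ => (if m ≤ p.1 then pK c ⊤ p.1 else 0) * pK c ⊤ p.2)
      ((∑' a : ℕ, if m ≤ a then pK c ⊤ a else 0) * 1) := by
    have h := hs1.hasSum
    have heq := HasSum.mul_eq hg1has (hasSum_pk_top hc) h
    rwa [← heq] at h
  have hs2 : Summable (fun p : ℕ × ℕ => pK c ⊤ p.1 * (if m ≤ p.2 then pK c ⊤ p.2 else 0)) :=
    (summable_pk_top hc).mul_of_nonneg hg1sum (fun n => pk_top_nonneg hc n) hg1nonneg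
  have hs2' : HasSum (fun p : ℕ × ℕ => pK c ⊤ p.1 * (if m ≤ p.2 then pK c ⊤ p.2 else 0))
      (1 * ∑' a : ℕ, if m ≤ a then pK c ⊤ a else 0) := by
    have h := hs2.hasSum
    have heq := HasSum.mul_eq (hasSum_pk_top hc) hg1has h
    rwa [← heq] at h
  have hFnonneg : ∀ p : ℕ × ℕ, 0 ≤ (if i ≤ p.1 + p.2 then pK c ⊤ p.1 * pK c ⊤ p.2 else 0) :=
    fun p => by
      split
      · exact mul_nonneg (pk_top_nonneg hc _) (pk_top_nonneg hc _)
      · exact le_rfl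
  have hFsum : Summable (fun p : ℕ × ℕ => if i ≤ p.1 + p.2 then pK c ⊤ p.1 * pK c ⊤ p.2 else 0) := by
    apply Summable.of_nonneg_of_le hFnonneg _ (summable_P hc)
    intro p
    split
    · exact le_rfl
    · exact mul_nonneg (pk_top_nonneg hc _) (pk_top_nonneg hc _)
  have hstep1 : ∑' j : ℕ, (if i ≤ j then Apair c j else 0)
      = ∑' p : ℕ × ℕ, (if i ≤ p.1 + p.2 then pK c ⊤ p.1 * pK c ⊤ p.2 else 0) := by
    rw [← tsum_antidiag _ hFsum]
    apply tsum_congr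
    intro j
    by_cases hij : i ≤ j
    · rw [if_pos hij]
      unfold Apair
      apply Finset.sum_congr rfl
      rintro ⟨a, b⟩ hp
      have hab : a + b = j := Finset.HasAntidiagonal.mem_antidiagonal.mp hp
      dsimp only
      rw [if_pos (by omega)]
    · rw [if_neg hij]
      symm
      apply Finset.sum_eq_zero
      rintro ⟨a, b⟩ hp
      have hab : a + b = j := Finset.HasAntidiagonal.mem_antidiagonal.mp hp
      dsimp only
      rw [if_neg (by omega)]
  have hstep2 : ∑' p : ℕ × ℕ, (if i ≤ p.1 + p.2 then pK c ⊤ p.1 * pK c ⊤ p.2 else 0)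
      ≤ ∑' p : ℕ × ℕ, ((if m ≤ p.1 then pK c ⊤ p.1 else 0) * pK c ⊤ p.2
        + pK c ⊤ p.1 * (if m ≤ p.2 then pK c ⊤ p.2 else 0)) := by
    apply Summable.tsum_le_tsum _ hFsum (hs1.add hs2)
    rintro ⟨a, b⟩
    have hb0 := pk_top_nonneg hc b
    have ha0 := pk_top_nonneg hc a
    have h1 : 0 ≤ (if m ≤ a then pK c ⊤ a else 0) * pK c ⊤ b :=
      mul_nonneg (hg1nonneg a) hb0
    have h2 : 0 ≤ pK c ⊤ a * (if m ≤ b then pK c ⊤ b else 0) :=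
      mul_nonneg ha0 (hg1nonneg b)
    dsimp only
    split
    case isTrue h =>
      rcases him a b h with hma | hmb
      · rw [if_pos hma]
        linarith
      · rw [if_pos hmb]
        rw [if_pos hmb] at h2
        linarith
    case isFalse h => linarith
  have hstep3 : ∑' p : ℕ × ℕ, ((if m ≤ p.1 then pK c ⊤ p.1 else 0) * pK c ⊤ p.2
        + pK c ⊤ p.1 * (if m ≤ p.2 then pK c ⊤ p.2 else 0))
      = (∑' a : ℕ, if m ≤ a then pK c ⊤ a else 0) * 1
        + 1 * (∑' a : ℕ, if m ≤ a then pK c ⊤ a else 0) := (hs1'.add hs2').tsum_eq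
  have hTnonneg : 0 ≤ ∑' a : ℕ, (if m ≤ a then pK c ⊤ a else 0) := tsum_nonneg hg1nonneg
  rw [hstep1]
  calc ∑' p : ℕ × ℕ, (if i ≤ p.1 + p.2 then pK c ⊤ p.1 * pK c ⊤ p.2 else 0)
      ≤ (∑' a : ℕ, if m ≤ a then pK c ⊤ a else 0) * 1
        + 1 * (∑' a : ℕ, if m ≤ a then pK c ⊤ a else 0) := by rw [← hstep3]; exact hstep2
    _ = 2 * (∑' a : ℕ, if m ≤ a then pK c ⊤ a else 0) := by ring
    _ ≤ 2 * (2 * c / ((m : ℝ) - 1)) := by linarith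

end FcAux

/-- If `X₂` has distribution `F_c²(δ_∞)`, then
`P(X₂ ≥ i) ≤ 16c²/((i-1)(i-2))` for all integers `i ≥ 4`. -/
theorem Fc_sq_deltaTop_tail (c : ℝ) (hc : 0 < c) (i : ℕ) (hi : 4 ≤ i) :
    (∑' k : ℕ∞, if (i : ℕ∞) ≤ k then Fc c (Fc c (delta ⊤)) k else 0) ≤
      16 * c ^ 2 / (((i : ℝ) - 1) * ((i : ℝ) - 2)) := by
  classical
  have hσ := FcAux.summable_FcFin_nu hc
  have h1 : HasSum (fun n : ℕ => if n < i then FcFin c (Fc c (delta ⊤)) n else 0)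
      (∑ n ∈ Finset.range i, FcFin c (Fc c (delta ⊤)) n) := by
    have h := hasSum_sum_of_ne_finset_zero (L := SummationFilter.unconditional ℕ) (s := Finset.range i)
      (f := fun n : ℕ => if n < i then FcFin c (Fc c (delta ⊤)) n else 0)
      (fun n hn => if_neg (by simpa using hn))
    have heq : ∑ n ∈ Finset.range i, (if n < i then FcFin c (Fc c (delta ⊤)) n else 0)
        = ∑ n ∈ Finset.range i, FcFin c (Fc c (delta ⊤)) n :=
      Finset.sum_congr rfl (fun n hn => if_pos (Finset.mem_range.mp hn))
    rwa [heq] at h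
  have hGnat : HasSum
      (fun n : ℕ => if (i : ℕ∞) ≤ (n : ℕ∞) then Fc c (Fc c (delta ⊤)) (n : ℕ∞) else 0)
      ((∑' n : ℕ, FcFin c (Fc c (delta ⊤)) n)
        - ∑ n ∈ Finset.range i, FcFin c (Fc c (delta ⊤)) n) := by
    have h2 := hσ.hasSum.sub h1
    refine h2.congr_fun ?_
    intro n
    by_cases hn : i ≤ n
    · rw [if_pos (by exact_mod_cast hn), if_neg (by omega), sub_zero,
        FcAux.Fc_coe _ (by omega : n ≠ 0)]
    · rw [if_neg (by exact_mod_cast hn), if_pos (by omega), sub_self]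
  have hG := FcAux.hasSum_enat
    (fun k : ℕ∞ => if (i : ℕ∞) ≤ k then Fc c (Fc c (delta ⊤)) k else 0) hGnat
  have htop : (if (i : ℕ∞) ≤ (⊤ : ℕ∞) then Fc c (Fc c (delta ⊤)) ⊤ else 0)
      = 1 - ∑' n : ℕ, FcFin c (Fc c (delta ⊤)) n := by
    rw [if_pos le_top]
    rfl
  rw [htop] at hG
  rw [hG.tsum_eq, FcAux.sum_FcFin hc i]
  have hA := FcAux.summable_Apair hc
  have hAs := FcAux.summable_As hc i
  have key2 : (∑' n : ℕ, FcFin c (Fc c (delta ⊤)) n)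
      - (∑' j : ℕ, FcAux.Apair c j * FcAux.sfun c i j)
      + (1 - ∑' n : ℕ, FcFin c (Fc c (delta ⊤)) n)
      = ∑' j : ℕ, (FcAux.Apair c j - FcAux.Apair c j * FcAux.sfun c i j) := by
    rw [Summable.tsum_sub hA hAs, FcAux.tsum_Apair hc]
    ring
  rw [key2]
  have hi4 : (4 : ℝ) ≤ (i : ℝ) := by exact_mod_cast hi
  have hβ : 0 ≤ 2 * c / ((i : ℝ) - 1) := div_nonneg (by linarith) (by linarith)
  have hm2 : 2 ≤ (i + 1) / 2 := by omega
  have him : ∀ a b : ℕ, i ≤ a + b → (i + 1) / 2 ≤ a ∨ (i + 1) / 2 ≤ b := by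
    intro a b hab
    omega
  have htail := FcAux.tsum_Apair_tail_le hc hm2 him
  have key3 : ∑' j : ℕ, (FcAux.Apair c j - FcAux.Apair c j * FcAux.sfun c i j)
      ≤ ∑' j : ℕ, (if i ≤ j then (2 * c / ((i : ℝ) - 1)) * FcAux.Apair c j else 0) := by
    refine Summable.tsum_le_tsum ?_ (hA.sub hAs) ?_
    · intro j
      by_cases hj : i ≤ j
      · rw [if_pos hj]
        have hs := FcAux.s_ge hc (by omega : 2 ≤ i) hj
        have hA0 := FcAux.Apair_nonneg hc j
        nlinarith [FcAux.s_le_one hc i j]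
      · rw [if_neg hj, FcAux.s_eq_one hc (by omega : j < i), mul_one, sub_self]
    · apply Summable.of_nonneg_of_le _ _ (hA.mul_left (2 * c / ((i : ℝ) - 1)))
      · intro j
        split
        · exact mul_nonneg hβ (FcAux.Apair_nonneg hc j)
        · exact le_rfl
      · intro j
        split
        · exact le_rfl
        · exact mul_nonneg hβ (FcAux.Apair_nonneg hc j)
  have key4 : ∑' j : ℕ, (if i ≤ j then (2 * c / ((i : ℝ) - 1)) * FcAux.Apair c j else 0)
      = (2 * c / ((i : ℝ) - 1)) * ∑' j : ℕ, (if i ≤ j then FcAux.Apair c j else 0) := by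
    rw [← tsum_mul_left]
    apply tsum_congr
    intro j
    split <;> simp
  have hmR : (i : ℝ) ≤ 2 * (((i + 1) / 2 : ℕ) : ℝ) := by
    exact_mod_cast (by omega : i ≤ 2 * ((i + 1) / 2))
  have hm1 : (2 : ℝ) ≤ (((i + 1) / 2 : ℕ) : ℝ) := by exact_mod_cast hm2
  have hfin : (2 * c / ((i : ℝ) - 1)) * (2 * (2 * c / ((((i + 1) / 2 : ℕ) : ℝ) - 1)))
      ≤ 16 * c ^ 2 / (((i : ℝ) - 1) * ((i : ℝ) - 2)) := by
    have h1 : 2 * c / ((((i + 1) / 2 : ℕ) : ℝ) - 1) ≤ 4 * c / ((i : ℝ) - 2) := by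
      rw [div_le_div_iff₀ (by linarith) (by linarith)]
      nlinarith
    have h2 : (2 * c / ((i : ℝ) - 1)) * (2 * (2 * c / ((((i + 1) / 2 : ℕ) : ℝ) - 1)))
        ≤ (2 * c / ((i : ℝ) - 1)) * (2 * (4 * c / ((i : ℝ) - 2))) := by
      apply mul_le_mul_of_nonneg_left _ hβ
      linarith
    have h3 : (2 * c / ((i : ℝ) - 1)) * (2 * (4 * c / ((i : ℝ) - 2)))
        = 16 * c ^ 2 / (((i : ℝ) - 1) * ((i : ℝ) - 2)) := by
      field_simp
      ring
    linarith
  refine le_trans key3 ?_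
  rw [key4]
  exact le_trans (mul_le_mul_of_nonneg_left htail hβ) hfin
end
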